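/- arXiv:1707.06712 — 14 statements merged into one kernel-verified Lean document; each statement's English description precedes it below -/
import Mathlib

section
/- For every integer k ≥ 1 and every pair of positive integers x with real y ≥ 0 satisfying x·y ≥ r, the inequality a_k x + b_k y ≥ 1 holds, where a_k = 1/(2k-1) and b_k = k(k-1)/(r(2k-1)). -/
theorem stmt_1 (r : ℝ) (hr : 0 < r) (k : ℕ) (hk : 1 ≤ k)
    (x : ℕ) (hx : 1 ≤ x) (y : ℝ) (hy : 0 ≤ y) (hxy : r ≤ (x : ℝ) * y) :
    1 ≤ (1 / (2 * (k : ℝ) - 1)) * (x : ℝ)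
      + ((k : ℝ) * ((k : ℝ) - 1) / (r * (2 * (k : ℝ) - 1))) * y := by
  have hX : (1:ℝ) ≤ (x:ℝ) := by exact_mod_cast hx
  have hK : (1:ℝ) ≤ (k:ℝ) := by exact_mod_cast hk
  have h2k : (0:ℝ) < 2*(k:ℝ)-1 := by linarith
  have hx0 : (0:ℝ) < (x:ℝ) := by linarith
  have key : (0:ℝ) ≤ ((x:ℝ) - k) * ((x:ℝ) - ((k:ℝ)-1)) := by
    rcases le_or_gt k x with h | h
    · have h' : (k:ℝ) ≤ (x:ℝ) := by exact_mod_cast h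
      nlinarith
    · have h' : x + 1 ≤ k := h
      have h'' : ((x:ℝ)) + 1 ≤ (k:ℝ) := by exact_mod_cast h'
      nlinarith
  have hKK : (0:ℝ) ≤ (k:ℝ)*((k:ℝ)-1) := by nlinarith
  rw [div_mul_eq_mul_div, div_mul_eq_mul_div,
    div_add_div _ _ h2k.ne' (mul_pos hr h2k).ne',
    le_div_iff₀ (mul_pos h2k (mul_pos hr h2k))]
  nlinarith [mul_nonneg hKK (sub_nonneg.2 hxy), mul_nonneg hr.le key, hx0.le]
end

section
/- Let (x̄, ȳ) be an extreme point of conv(S), where S = {(x,y) ∈ ℤ^n_+ × ℝ^n_+ : Σ_{i=1}^n x_i y_i ≥ r} with r > 0. Then there exists an index t such that x̄_t ȳ_t = r and x̄_i = 0, ȳ_i = 0 for all i ≠ t. -/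
theorem stmt_2 (n : ℕ) (hn : 1 ≤ n) (r : ℝ) (hr : 0 < r)
    (S : Set ((Fin n → ℝ) × (Fin n → ℝ)))
    (hS : S = {p | (∀ i, ∃ m : ℕ, p.1 i = (m : ℝ)) ∧ (∀ i, 0 ≤ p.2 i) ∧
      r ≤ ∑ i, p.1 i * p.2 i})
    (p : (Fin n → ℝ) × (Fin n → ℝ))
    (hp : p ∈ (convexHull ℝ S).extremePoints ℝ) :
    ∃ t, p.1 t * p.2 t = r ∧ ∀ i, i ≠ t → p.1 i = 0 ∧ p.2 i = 0 := by
  have hpS : p ∈ S := extremePoints_convexHull_subset hp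
  set x := p.1 with hxdef
  set y := p.2 with hydef
  rw [hS] at hpS
  obtain ⟨hx, hy, hsum⟩ := hpS
  rw [← hxdef] at hx
  rw [← hydef] at hy
  rw [show (∑ i, p.1 i * p.2 i) = ∑ i, x i * y i from rfl] at hsum
  have key : ∀ q₁ ∈ S, ∀ q₂ ∈ S,
      (1/2 : ℝ) • q₁ + (1/2 : ℝ) • q₂ = p → q₁ = p := by
    intro q₁ h₁ q₂ h₂ hmid
    exact (hp.2 (subset_convexHull ℝ S h₁) (subset_convexHull ℝ S h₂)
      ⟨1/2, 1/2, by norm_num, by norm_num, by norm_num, hmid⟩)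
  have hx0 : ∀ i, 0 ≤ x i := fun i => by obtain ⟨m, hm⟩ := hx i; rw [hm]; positivity
  -- Step A: the sum equals r
  have hA : ∑ i, x i * y i = r := by
    by_contra hne
    have hlt : r < ∑ i, x i * y i := lt_of_le_of_ne hsum (Ne.symm hne)
    set Sg := ∑ i, x i * y i with hSg
    have hSgpos : 0 < Sg := hr.trans hlt
    set ε : ℝ := 1 - r / Sg with hε
    have hε0 : 0 < ε := by
      have : r / Sg < 1 := (div_lt_one hSgpos).2 hlt
      simp only [hε]; linarith
    have hε1 : ε < 1 := by
      have : 0 < r / Sg := div_pos hr hSgpos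
      simp only [hε]; linarith
    have h1 : ((x, (1+ε) • y) : (Fin n → ℝ) × (Fin n → ℝ)) ∈ S := by
      rw [hS]
      refine ⟨hx, fun i => by have := hy i; simp only [Pi.smul_apply, smul_eq_mul]; nlinarith, ?_⟩
      have hs : ∑ i, x i * ((1+ε) • y) i = (1+ε) * Sg := by
        rw [hSg, Finset.mul_sum]
        exact Finset.sum_congr rfl fun i _ => by simp only [Pi.smul_apply, smul_eq_mul]; ring
      simp only [hs]; nlinarith
    have h2 : ((x, (1-ε) • y) : (Fin n → ℝ) × (Fin n → ℝ)) ∈ S := by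
      rw [hS]
      refine ⟨hx, fun i => by have := hy i; simp only [Pi.smul_apply, smul_eq_mul]; nlinarith, ?_⟩
      have hs : ∑ i, x i * ((1-ε) • y) i = (1-ε) * Sg := by
        rw [hSg, Finset.mul_sum]
        exact Finset.sum_congr rfl fun i _ => by simp only [Pi.smul_apply, smul_eq_mul]; ring
      rw [hs, hε, sub_sub_cancel, div_mul_cancel₀ r hSgpos.ne']
    have hmid : (1/2 : ℝ) • ((x, (1+ε) • y) : (Fin n → ℝ) × (Fin n → ℝ))
        + (1/2 : ℝ) • ((x, (1-ε) • y) : (Fin n → ℝ) × (Fin n → ℝ)) = p := by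
      refine Prod.ext ?_ ?_
      · show (1/2 : ℝ) • x + (1/2 : ℝ) • x = x
        funext k; simp; ring
      · show (1/2 : ℝ) • ((1+ε) • y) + (1/2 : ℝ) • ((1-ε) • y) = y
        funext k; simp; ring
    have heq := key _ h1 _ h2 hmid
    have hy2 : (1+ε) • y = y := congrArg Prod.snd heq
    -- find i with y i ≠ 0
    obtain ⟨i, _, hi⟩ := Finset.exists_ne_zero_of_sum_ne_zero
      (by rw [← hSg]; exact hSgpos.ne' : ∑ i, x i * y i ≠ 0)
    have hyi : y i ≠ 0 := fun h => hi (by rw [h, mul_zero])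
    have := congrFun hy2 i
    simp only [Pi.smul_apply, smul_eq_mul] at this
    have : ε * y i = 0 := by linarith
    rcases mul_eq_zero.1 this with h | h
    · exact hε0.ne' h
    · exact hyi h
  -- Step B: x i ≠ 0 → y i ≠ 0
  have hB : ∀ i, x i ≠ 0 → y i ≠ 0 := by
    intro i hxi hyi
    obtain ⟨m, hm⟩ := hx i
    have hm1 : 1 ≤ m := by
      rcases Nat.eq_zero_or_pos m with h | h
      · exact absurd (by rw [hm, h]; simp) hxi
      · exact h
    have h1 : ((Function.update x i (x i + 1), y) : (Fin n → ℝ) × (Fin n → ℝ)) ∈ S := by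
      rw [hS]
      refine ⟨?_, hy, ?_⟩
      · intro k
        by_cases hk : k = i
        · subst hk; exact ⟨m + 1, by simp [Function.update_self, hm]⟩
        · simpa [Function.update_of_ne hk] using hx k
      · have hs : ∑ k, Function.update x i (x i + 1) k * y k = ∑ k, x k * y k := by
          refine Finset.sum_congr rfl fun k _ => ?_
          by_cases hk : k = i
          · subst hk; rw [hyi, mul_zero, mul_zero]
          · rw [Function.update_of_ne hk]
        simp only [hs]; exact hsum
    have h2 : ((Function.update x i (x i - 1), y) : (Fin n → ℝ) × (Fin n → ℝ)) ∈ S := by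
      rw [hS]
      refine ⟨?_, hy, ?_⟩
      · intro k
        by_cases hk : k = i
        · subst hk
          refine ⟨m - 1, ?_⟩
          simp only [Function.update_self, hm]
          rw [Nat.cast_sub hm1]; simp
        · simpa [Function.update_of_ne hk] using hx k
      · have hs : ∑ k, Function.update x i (x i - 1) k * y k = ∑ k, x k * y k := by
          refine Finset.sum_congr rfl fun k _ => ?_
          by_cases hk : k = i
          · subst hk; rw [hyi, mul_zero, mul_zero]
          · rw [Function.update_of_ne hk]
        simp only [hs]; exact hsum
    have hmid : (1/2 : ℝ) • ((Function.update x i (x i + 1), y) : (Fin n → ℝ) × (Fin n → ℝ))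
        + (1/2 : ℝ) • ((Function.update x i (x i - 1), y) : (Fin n → ℝ) × (Fin n → ℝ)) = p := by
      refine Prod.ext ?_ ?_
      · show (1/2 : ℝ) • Function.update x i (x i + 1) + (1/2 : ℝ) • Function.update x i (x i - 1) = x
        funext k
        by_cases hk : k = i
        · subst hk; simp [Function.update_self]; ring
        · simp [Function.update_of_ne hk]; ring
      · show (1/2 : ℝ) • y + (1/2 : ℝ) • y = y
        funext k; simp; ring
    have heq := key _ h1 _ h2 hmid
    have := congrFun (congrArg Prod.fst heq) i
    simp only [Function.update_self] at this
    rw [← hxdef] at this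
    linarith [this]
  -- Step C: y i ≠ 0 → x i ≠ 0
  have hC : ∀ i, y i ≠ 0 → x i ≠ 0 := by
    intro i hyi hxi
    have h1 : ((x, Function.update y i (2 * y i)) : (Fin n → ℝ) × (Fin n → ℝ)) ∈ S := by
      rw [hS]
      refine ⟨hx, ?_, ?_⟩
      · intro k
        by_cases hk : k = i
        · subst hk; simp [Function.update_self]; linarith [hy k]
        · simpa [Function.update_of_ne hk] using hy k
      · have hs : ∑ k, x k * Function.update y i (2 * y i) k = ∑ k, x k * y k := by
          refine Finset.sum_congr rfl fun k _ => ?_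
          by_cases hk : k = i
          · subst hk; rw [hxi, zero_mul, zero_mul]
          · rw [Function.update_of_ne hk]
        simp only [hs]; exact hsum
    have h2 : ((x, Function.update y i 0) : (Fin n → ℝ) × (Fin n → ℝ)) ∈ S := by
      rw [hS]
      refine ⟨hx, ?_, ?_⟩
      · intro k
        by_cases hk : k = i
        · subst hk; simp [Function.update_self]
        · simpa [Function.update_of_ne hk] using hy k
      · have hs : ∑ k, x k * Function.update y i 0 k = ∑ k, x k * y k := by
          refine Finset.sum_congr rfl fun k _ => ?_
          by_cases hk : k = i
          · subst hk; rw [hxi, zero_mul, zero_mul]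
          · rw [Function.update_of_ne hk]
        simp only [hs]; exact hsum
    have hmid : (1/2 : ℝ) • ((x, Function.update y i (2 * y i)) : (Fin n → ℝ) × (Fin n → ℝ))
        + (1/2 : ℝ) • ((x, Function.update y i 0) : (Fin n → ℝ) × (Fin n → ℝ)) = p := by
      refine Prod.ext ?_ ?_
      · show (1/2 : ℝ) • x + (1/2 : ℝ) • x = x
        funext k; simp; ring
      · show (1/2 : ℝ) • Function.update y i (2 * y i) + (1/2 : ℝ) • Function.update y i 0 = y
        funext k
        by_cases hk : k = i
        · subst hk; simp [Function.update_self]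
        · simp [Function.update_of_ne hk]; ring
    have heq := key _ h1 _ h2 hmid
    have := congrFun (congrArg Prod.snd heq) i
    simp only [Function.update_self] at this
    rw [← hydef] at this
    apply hyi; linarith [this]
  -- Step D: at most one nonzero y
  have hD : ∀ i j, i ≠ j → y i ≠ 0 → y j ≠ 0 → False := by
    intro i j hij hyi hyj
    have hyi' : 0 < y i := (hy i).lt_of_ne (Ne.symm hyi)
    have hyj' : 0 < y j := (hy j).lt_of_ne (Ne.symm hyj)
    have hxi' : 0 < x i := (hx0 i).lt_of_ne (Ne.symm (hC i hyi))
    have hxj' : 0 < x j := (hx0 j).lt_of_ne (Ne.symm (hC j hyj))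
    set ε : ℝ := min (y i / x j) (y j / x i) with hε
    have hε0 : 0 < ε := lt_min (div_pos hyi' hxj') (div_pos hyj' hxi')
    have hεi : ε * x j ≤ y i := by
      have := min_le_left (y i / x j) (y j / x i)
      rw [← hε] at this
      calc ε * x j ≤ (y i / x j) * x j := by nlinarith
      _ = y i := by field_simp
    have hεj : ε * x i ≤ y j := by
      have := min_le_right (y i / x j) (y j / x i)
      rw [← hε] at this
      calc ε * x i ≤ (y j / x i) * x i := by nlinarith
      _ = y j := by field_simp
    set d : Fin n → ℝ := fun k => if k = i then ε * x j else if k = j then -(ε * x i) else 0 with hd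
    have hdsum : ∑ k, x k * d k = 0 := by
      have : ∀ k : Fin n, x k * d k =
          (if k = i then x i * (ε * x j) else 0) + (if k = j then -(x j * (ε * x i)) else 0) := by
        intro k
        by_cases hk : k = i
        · subst hk; simp [hd, hij]
        · by_cases hk' : k = j
          · subst hk'; simp [hd, hk]
          · simp [hd, hk, hk']
      rw [Finset.sum_congr rfl fun k _ => this k, Finset.sum_add_distrib]
      simp [Finset.sum_ite_eq']
      ring
    have hnn1 : ∀ k, 0 ≤ y k + d k := by
      intro k
      by_cases hk : k = i
      · subst hk; simp only [hd]; simp; positivity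
      · by_cases hk' : k = j
        · subst hk'; simp only [hd]; simp [hk]; linarith [hεj]
        · simp only [hd]; simp [hk, hk']; exact hy k
    have hnn2 : ∀ k, 0 ≤ y k - d k := by
      intro k
      by_cases hk : k = i
      · subst hk; simp only [hd]; simp; linarith [hεi]
      · by_cases hk' : k = j
        · subst hk'; simp only [hd]; simp [hk]; positivity
        · simp only [hd]; simp [hk, hk']; exact hy k
    have h1 : ((x, y + d) : (Fin n → ℝ) × (Fin n → ℝ)) ∈ S := by
      rw [hS]
      refine ⟨hx, fun k => hnn1 k, ?_⟩
      have hs : ∑ k, x k * (y + d) k = ∑ k, x k * y k + ∑ k, x k * d k := by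
        rw [← Finset.sum_add_distrib]
        exact Finset.sum_congr rfl fun k _ => by simp [Pi.add_apply]; ring
      simp only [hs, hdsum, add_zero]; exact hsum
    have h2 : ((x, y - d) : (Fin n → ℝ) × (Fin n → ℝ)) ∈ S := by
      rw [hS]
      refine ⟨hx, fun k => hnn2 k, ?_⟩
      have hs : ∑ k, x k * (y - d) k = ∑ k, x k * y k - ∑ k, x k * d k := by
        rw [← Finset.sum_sub_distrib]
        exact Finset.sum_congr rfl fun k _ => by simp [Pi.sub_apply]; ring
      simp only [hs, hdsum, sub_zero]; exact hsum
    have hmid : (1/2 : ℝ) • ((x, y + d) : (Fin n → ℝ) × (Fin n → ℝ))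
        + (1/2 : ℝ) • ((x, y - d) : (Fin n → ℝ) × (Fin n → ℝ)) = p := by
      refine Prod.ext ?_ ?_
      · show (1/2 : ℝ) • x + (1/2 : ℝ) • x = x
        funext k; simp; ring
      · show (1/2 : ℝ) • (y + d) + (1/2 : ℝ) • (y - d) = y
        funext k; simp; ring
    have heq := key _ h1 _ h2 hmid
    have := congrFun (congrArg Prod.snd heq) i
    rw [← hydef] at this
    simp only [Pi.add_apply, hd, if_pos rfl, if_true] at this
    nlinarith [this, mul_pos hε0 hxj']
  -- Assemble
  obtain ⟨t, _, ht⟩ := Finset.exists_ne_zero_of_sum_ne_zero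
    (by rw [hA]; exact hr.ne' : ∑ i, x i * y i ≠ 0)
  have hyt : y t ≠ 0 := fun h => ht (by rw [h, mul_zero])
  have hother : ∀ i, i ≠ t → x i = 0 ∧ y i = 0 := by
    intro i hi
    have hyi : y i = 0 := by
      by_contra h
      exact hD i t hi h hyt
    have hxi : x i = 0 := by
      by_contra h
      exact hB i h hyi
    exact ⟨hxi, hyi⟩
  refine ⟨t, ?_, hother⟩
  have : ∑ i, x i * y i = x t * y t := by
    refine Finset.sum_eq_single t (fun b _ hb => ?_) (by simp)
    rw [(hother b hb).2, mul_zero]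
  rw [← this, hA]
end

section
/- Let S = {(x,y) ∈ ℤ^n_+ × ℝ^n_+ : Σ_i x_i y_i ≥ r} with r > 0, and for i ∈ {1,...,n} let S_i = {(x,y) ∈ S : x_j = 0 and y_j = 0 for all j ≠ i}. Then (x̄,ȳ) is an extreme point of conv(S) if and only if (x̄,ȳ) is an extreme point of conv(S_i) for some i. -/
open Finset

lemma convexHull_nonneg_func {E : Type*} [AddCommGroup E] [Module ℝ E]
    (A : Set E) (g : E →ₗ[ℝ] ℝ) (hg : ∀ q ∈ A, 0 ≤ g q) :
    ∀ z ∈ convexHull ℝ A, 0 ≤ g z := by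
  intro z hz
  have : convexHull ℝ A ⊆ {x | 0 ≤ g x} := by
    apply convexHull_min hg
    intro a ha b hb α β hα hβ hαβ
    show 0 ≤ g (α • a + β • b)
    rw [map_add, map_smul, map_smul, smul_eq_mul, smul_eq_mul]
    exact add_nonneg (mul_nonneg hα ha) (mul_nonneg hβ hb)
  exact this hz

lemma mem_convexHull_face {E : Type*} [AddCommGroup E] [Module ℝ E] {ι : Type*}
    (A : Set E) (g : ι → E →ₗ[ℝ] ℝ) (hg : ∀ c, ∀ q ∈ A, 0 ≤ g c q)
    {z : E} (hz : z ∈ convexHull ℝ A) (hz0 : ∀ c, g c z = 0) :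
    z ∈ convexHull ℝ {q ∈ A | ∀ c, g c q = 0} := by
  rw [_root_.convexHull_eq] at hz
  obtain ⟨κ, t, w, f, hw, hw1, hf, hcm⟩ := hz
  have hzsum : z = ∑ k ∈ t, w k • f k := by
    rw [← hcm]; simp [Finset.centerMass, hw1]
  have key : ∀ k ∈ t, w k ≠ 0 → ∀ c, g c (f k) = 0 := by
    intro k hk hwk c
    have hsum : ∑ k ∈ t, w k * g c (f k) = 0 := by
      have := hz0 c
      rw [hzsum] at this
      simpa [map_sum, map_smul] using this
    have := (Finset.sum_eq_zero_iff_of_nonneg (fun k hk => mul_nonneg (hw k hk) (hg c _ (hf k hk)))).1 hsum k hk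
    rcases mul_eq_zero.1 this with h | h
    · exact absurd h hwk
    · exact h
  rw [← Finset.centerMass_filter_ne_zero (t := t) (w := w) (z := f)] at hcm
  rw [← hcm]
  apply Finset.centerMass_mem_convexHull
  · intro k hk; exact hw k (Finset.mem_filter.1 hk).1
  · rw [Finset.sum_filter_ne_zero, hw1]; norm_num
  · intro k hk
    obtain ⟨hk1, hk2⟩ := Finset.mem_filter.1 hk
    exact ⟨hf k hk1, key k hk1 hk2⟩

lemma sum_mul_update {n : ℕ} (x y : Fin n → ℝ) (j : Fin n) (v : ℝ) :
    ∑ i, x i * Function.update y j v i = ∑ i, x i * y i - x j * y j + x j * v := by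
  have h : (fun i => x i * Function.update y j v i) = Function.update (fun i => x i * y i) j (x j * v) := by
    funext i
    rcases eq_or_ne i j with rfl | h
    · simp
    · simp [Function.update_of_ne h]
  rw [h, Finset.sum_update_of_mem (Finset.mem_univ j)]
  rw [Finset.sum_eq_sum_sdiff_singleton_add (Finset.mem_univ j) (fun i => x i * y i)]
  ring

lemma sum_update_mul {n : ℕ} (x y : Fin n → ℝ) (j : Fin n) (v : ℝ) :
    ∑ i, Function.update x j v i * y i = ∑ i, x i * y i - x j * y j + v * y j := by
  have h : (fun i => Function.update x j v i * y i) = Function.update (fun i => x i * y i) j (v * y j) := by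
    funext i
    rcases eq_or_ne i j with rfl | h
    · simp
    · simp [Function.update_of_ne h]
  rw [h, Finset.sum_update_of_mem (Finset.mem_univ j)]
  rw [Finset.sum_eq_sum_sdiff_singleton_add (Finset.mem_univ j) (fun i => x i * y i)]
  ring

theorem stmt_3 (n : ℕ) (hn : 1 ≤ n) (r : ℝ) (hr : 0 < r)
    (S : Set ((Fin n → ℝ) × (Fin n → ℝ)))
    (hS : S = {p | (∀ i, ∃ m : ℕ, p.1 i = (m : ℝ)) ∧ (∀ i, 0 ≤ p.2 i) ∧
      r ≤ ∑ i, p.1 i * p.2 i})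
    (Si : Fin n → Set ((Fin n → ℝ) × (Fin n → ℝ)))
    (hSi : ∀ i, Si i = {p ∈ S | ∀ j, j ≠ i → p.1 j = 0 ∧ p.2 j = 0})
    (p : (Fin n → ℝ) × (Fin n → ℝ)) :
    p ∈ (convexHull ℝ S).extremePoints ℝ ↔
      ∃ i, p ∈ (convexHull ℝ (Si i)).extremePoints ℝ := by
  have hSiS : ∀ i, Si i ⊆ S := by
    intro i; rw [hSi]; exact fun q hq => hq.1
  constructor
  · -- forward
    intro hp
    have hpS : p ∈ S := extremePoints_convexHull_subset hp
    have hpS' := hpS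
    rw [hS] at hpS'
    obtain ⟨hx, hy, hsum⟩ := hpS'
    have tool : ∀ q1 q2 : (Fin n → ℝ) × (Fin n → ℝ), q1 ∈ S → q2 ∈ S →
        p = (1/2 : ℝ) • q1 + (1/2 : ℝ) • q2 → q1 = q2 := by
      intro q1 q2 h1 h2 hmid
      have hseg : p ∈ openSegment ℝ q1 q2 :=
        ⟨1/2, 1/2, by norm_num, by norm_num, by norm_num, hmid.symm⟩
      have := hp.2 (subset_convexHull ℝ _ h1) (subset_convexHull ℝ _ h2) hseg
      have h2' := hp.2 (subset_convexHull ℝ _ h2) (subset_convexHull ℝ _ h1) (by rw [openSegment_symm]; exact hseg)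
      rw [this, h2']
    -- step a : x j = 0 → y j = 0
    have stepa : ∀ j, p.1 j = 0 → p.2 j = 0 := by
      intro j hxj
      by_contra hyj
      have hyj' : 0 < p.2 j := (hy j).lt_of_ne (Ne.symm hyj)
      set q1 : (Fin n → ℝ) × (Fin n → ℝ) := (p.1, Function.update p.2 j 0) with hq1
      set q2 : (Fin n → ℝ) × (Fin n → ℝ) := (p.1, Function.update p.2 j (2 * p.2 j)) with hq2
      have hmemy : ∀ v : ℝ, 0 ≤ v → (p.1, Function.update p.2 j v) ∈ S := by
        intro v hv
        rw [hS]
        refine ⟨hx, ?_, ?_⟩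
        · intro l
          rcases eq_or_ne l j with rfl | h
          · simpa using hv
          · simpa [Function.update_of_ne h] using hy l
        · rw [sum_mul_update, hxj]
          simpa using hsum
      have h12 : q1 = q2 := by
        apply tool _ _ (hmemy 0 le_rfl) (hmemy (2 * p.2 j) (by linarith))
        ext l
        · show p.1 l = ((1/2 : ℝ) • q1 + (1/2 : ℝ) • q2).1 l
          simp [hq1, hq2]; try ring
        · show p.2 l = ((1/2 : ℝ) • q1 + (1/2 : ℝ) • q2).2 l
          rcases eq_or_ne l j with rfl | h
          · simp [hq1, hq2]; try ring
          · simp [hq1, hq2, Function.update_of_ne h]; try ring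
      have := congrArg (fun q => q.2 j) h12
      simp [hq1, hq2] at this
      linarith
    -- step b : y j = 0 → x j = 0
    have stepb : ∀ j, p.2 j = 0 → p.1 j = 0 := by
      intro j hyj
      by_contra hxj
      obtain ⟨m, hm⟩ := hx j
      have hmemx : ∀ mv : ℕ, (Function.update p.1 j (mv : ℝ), p.2) ∈ S := by
        intro mv
        rw [hS]
        refine ⟨?_, hy, ?_⟩
        · intro l
          rcases eq_or_ne l j with rfl | h
          · exact ⟨mv, by simp⟩
          · simpa [Function.update_of_ne h] using hx l
        · rw [sum_update_mul, hyj]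
          simpa using hsum
      have h12 : (Function.update p.1 j ((0 : ℕ) : ℝ), p.2) = (Function.update p.1 j ((2 * m : ℕ) : ℝ), p.2) := by
        apply tool _ _ (hmemx 0) (hmemx (2 * m))
        ext l
        · show p.1 l = _
          rcases eq_or_ne l j with rfl | h
          · simp [hm]; try push_cast; try ring
          · simp [Function.update_of_ne h]; try ring
        · show p.2 l = _
          simp; try ring
      have h0 : m = 0 := by
        have := congrArg (fun q => q.1 j) h12
        simp at this
        omega
      subst h0
      simp at hm
      exact hxj hm
    -- step c : no two indices both nonzero
    have stepc : ∀ j k, j ≠ k → p.1 j ≠ 0 → p.1 k ≠ 0 → False := by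
      intro j k hjk hxj hxk
      have hyj : 0 < p.2 j := by
        rcases (hy j).lt_or_eq with h | h
        · exact h
        · exact absurd (stepb j h.symm) hxj
      have hyk : 0 < p.2 k := by
        rcases (hy k).lt_or_eq with h | h
        · exact h
        · exact absurd (stepb k h.symm) hxk
      have hxj' : 0 < p.1 j := by
        obtain ⟨m, hm⟩ := hx j
        have hm0 : m ≠ 0 := by rintro rfl; simp at hm; exact hxj hm
        rw [hm]
        exact_mod_cast Nat.pos_of_ne_zero hm0
      have hxk' : 0 < p.1 k := by
        obtain ⟨m, hm⟩ := hx k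
        have hm0 : m ≠ 0 := by rintro rfl; simp at hm; exact hxk hm
        rw [hm]
        exact_mod_cast Nat.pos_of_ne_zero hm0
      set c := min (p.1 j * p.2 j) (p.1 k * p.2 k) with hc
      have hcpos : 0 < c := lt_min (mul_pos hxj' hyj) (mul_pos hxk' hyk)
      set dj := c / p.1 j with hdj
      set dk := c / p.1 k with hdk
      have hdjpos : 0 < dj := div_pos hcpos hxj'
      have hdkpos : 0 < dk := div_pos hcpos hxk'
      have hdjle : dj ≤ p.2 j := by
        rw [hdj, div_le_iff₀ hxj']
        calc c ≤ p.1 j * p.2 j := min_le_left _ _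
        _ = p.2 j * p.1 j := by ring
      have hdkle : dk ≤ p.2 k := by
        rw [hdk, div_le_iff₀ hxk']
        calc c ≤ p.1 k * p.2 k := min_le_right _ _
        _ = p.2 k * p.1 k := by ring
      have hjc : p.1 j * dj = c := by rw [hdj]; field_simp
      have hkc : p.1 k * dk = c := by rw [hdk]; field_simp
      have hkj : k ≠ j := fun h => hjk h.symm
      have hmem : ∀ s1 s2 : ℝ, 0 ≤ p.2 j + s1 * dj → 0 ≤ p.2 k + s2 * dk → s1 * dj * p.1 j + s2 * dk * p.1 k = 0 →
          (p.1, Function.update (Function.update p.2 j (p.2 j + s1 * dj)) k (p.2 k + s2 * dk)) ∈ S := by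
        intro s1 s2 h1 h2 h3
        rw [hS]
        refine ⟨hx, ?_, ?_⟩
        · intro l
          rcases eq_or_ne l k with rfl | hlk
          · simpa using h2
          · rcases eq_or_ne l j with rfl | hlj
            · simpa [Function.update_of_ne hlk, Function.update_of_ne hkj] using h1
            · simpa [Function.update_of_ne hlk, Function.update_of_ne hlj] using hy l
        · rw [sum_mul_update, sum_mul_update, Function.update_of_ne hkj]
          have : ∑ i, p.1 i * p.2 i - p.1 j * p.2 j + p.1 j * (p.2 j + s1 * dj) - p.1 k * p.2 k +
              p.1 k * (p.2 k + s2 * dk) = ∑ i, p.1 i * p.2 i + (s1 * dj * p.1 j + s2 * dk * p.1 k) := by ring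
          rw [this, h3, add_zero]
          exact hsum
      have h12 := tool _ _ (hmem 1 (-1) (by nlinarith) (by nlinarith) (by linear_combination hjc - hkc))
        (hmem (-1) 1 (by nlinarith) (by nlinarith) (by linear_combination hkc - hjc)) ?_
      · have := congrArg (fun q => q.2 j) h12
        simp [Function.update_of_ne hjk] at this
        linarith
      · ext l
        · show p.1 l = _
          simp; try ring
        · show p.2 l = _
          rcases eq_or_ne l k with rfl | hlk
          · simp; try ring
          · rcases eq_or_ne l j with rfl | hlj
            · simp [Function.update_of_ne hlk, Function.update_of_ne hkj]; try ring
            · simp [Function.update_of_ne hlk, Function.update_of_ne hlj]; try ring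
    -- conclude
    have hex : ∃ j, p.1 j ≠ 0 := by
      by_contra h
      push_neg at h
      have : ∑ i, p.1 i * p.2 i = 0 := by
        apply Finset.sum_eq_zero
        intro i _
        rw [h i, zero_mul]
      rw [this] at hsum
      linarith
    obtain ⟨j0, hj0⟩ := hex
    refine ⟨j0, ?_⟩
    have hmemSi : p ∈ Si j0 := by
      rw [hSi]
      refine ⟨hpS, ?_⟩
      intro j hj
      have hxz : p.1 j = 0 := by
        by_contra h
        exact stepc j j0 hj h hj0
      exact ⟨hxz, stepa j hxz⟩
    refine ⟨subset_convexHull ℝ _ hmemSi, ?_⟩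
    intro a ha b hb hseg
    exact hp.2 (convexHull_mono (hSiS j0) ha) (convexHull_mono (hSiS j0) hb) hseg
  · -- backward
    rintro ⟨i, hp⟩
    have hpSi : p ∈ Si i := extremePoints_convexHull_subset hp
    have hpz : ∀ j, j ≠ i → p.1 j = 0 ∧ p.2 j = 0 := by
      have := hpSi
      rw [hSi] at this
      exact this.2
    set g : {j : Fin n // j ≠ i} × Bool → ((Fin n → ℝ) × (Fin n → ℝ)) →ₗ[ℝ] ℝ := fun c =>
      if c.2 then (LinearMap.proj c.1.1).comp (LinearMap.fst ℝ (Fin n → ℝ) (Fin n → ℝ))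
      else (LinearMap.proj c.1.1).comp (LinearMap.snd ℝ (Fin n → ℝ) (Fin n → ℝ)) with hg
    have hgval : ∀ c q, g c q = if c.2 then q.1 c.1.1 else q.2 c.1.1 := by
      intro c q
      rcases c with ⟨⟨j, hj⟩, b⟩
      cases b <;> simp [hg]
    have hgpos : ∀ c, ∀ q ∈ S, 0 ≤ g c q := by
      intro c q hq
      rw [hS] at hq
      rw [hgval]
      rcases c with ⟨⟨j, hj⟩, b⟩
      cases b
      · simpa using hq.2.1 j
      · obtain ⟨m, hm⟩ := hq.1 j
        simp [hm]
    have hgp : ∀ c, g c p = 0 := by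
      intro c
      rw [hgval]
      rcases c with ⟨⟨j, hj⟩, b⟩
      cases b
      · simpa using (hpz j hj).2
      · simpa using (hpz j hj).1
    have hfaceSi : {q ∈ S | ∀ c, g c q = 0} ⊆ Si i := by
      intro q hq
      rw [hSi]
      refine ⟨hq.1, ?_⟩
      intro j hj
      constructor
      · have := hq.2 ⟨⟨j, hj⟩, true⟩
        rwa [hgval] at this
      · have := hq.2 ⟨⟨j, hj⟩, false⟩
        rwa [hgval] at this
    refine ⟨convexHull_mono (hSiS i) hp.1, ?_⟩
    intro a ha b hb hseg
    obtain ⟨α, β, hα, hβ, hαβ, habp⟩ := hseg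
    have hzero : ∀ c, g c a = 0 ∧ g c b = 0 := by
      intro c
      have hga : 0 ≤ g c a := convexHull_nonneg_func S (g c) (hgpos c) a ha
      have hgb : 0 ≤ g c b := convexHull_nonneg_func S (g c) (hgpos c) b hb
      have : α * g c a + β * g c b = 0 := by
        have := congrArg (g c) habp
        rw [map_add, map_smul, map_smul, smul_eq_mul, smul_eq_mul, hgp c] at this
        exact this
      constructor
      · nlinarith
      · nlinarith
    have haSi : a ∈ convexHull ℝ (Si i) :=
      convexHull_mono hfaceSi (mem_convexHull_face S g hgpos ha (fun c => (hzero c).1))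
    have hbSi : b ∈ convexHull ℝ (Si i) :=
      convexHull_mono hfaceSi (mem_convexHull_face S g hgpos hb (fun c => (hzero c).2))
    exact hp.2 haSi hbSi ⟨α, β, hα, hβ, hαβ, habp⟩
end

section
/- Every point (x̄, ȳ) that is a midpoint of a nontrivial convex combination argument as follows cannot be extreme: if (x̄,ȳ) ∈ conv(S) has two indices i ≠ j with x̄_i ȳ_i > 0 and x̄_j ȳ_j > 0, then (x̄,ȳ) is not an extreme point of conv(S). -/
theorem stmt_4 (n : ℕ) (hn : 2 ≤ n) (r : ℝ) (hr : 0 < r)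
    (S : Set ((Fin n → ℝ) × (Fin n → ℝ)))
    (hS : S = {p | (∀ i, ∃ m : ℕ, p.1 i = (m : ℝ)) ∧ (∀ i, 0 ≤ p.2 i) ∧
      r ≤ ∑ i, p.1 i * p.2 i})
    (p : (Fin n → ℝ) × (Fin n → ℝ)) (hpS : p ∈ convexHull ℝ S)
    (i j : Fin n) (hij : i ≠ j)
    (hi : 0 < p.1 i * p.2 i) (hj : 0 < p.1 j * p.2 j) :
    p ∉ (convexHull ℝ S).extremePoints ℝ := by
  intro hext
  have hpmem : p ∈ S := extremePoints_convexHull_subset hext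
  rw [hS] at hpmem
  obtain ⟨hx, hy, hsum⟩ := hpmem
  have hx_nonneg : ∀ k, 0 ≤ p.1 k := by
    intro k; obtain ⟨m, hm⟩ := hx k; rw [hm]; positivity
  have hxi : 0 < p.1 i :=
    (mul_pos_iff.mp hi).elim (fun h => h.1) fun h => absurd h.1 (not_lt.mpr (hx_nonneg i))
  have hyi : 0 < p.2 i :=
    (mul_pos_iff.mp hi).elim (fun h => h.2) fun h => absurd h.2 (not_lt.mpr (hy i))
  have hxj : 0 < p.1 j :=
    (mul_pos_iff.mp hj).elim (fun h => h.1) fun h => absurd h.1 (not_lt.mpr (hx_nonneg j))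
  have hyj : 0 < p.2 j :=
    (mul_pos_iff.mp hj).elim (fun h => h.2) fun h => absurd h.2 (not_lt.mpr (hy j))
  -- perturbation direction
  set d : Fin n → ℝ := fun k => if k = i then p.1 j else if k = j then -(p.1 i) else 0 with hd
  set t : ℝ := min (p.2 i / p.1 j) (p.2 j / p.1 i) with ht
  have ht_pos : 0 < t := lt_min (div_pos hyi hxj) (div_pos hyj hxi)
  have htj : t * p.1 i ≤ p.2 j := by
    have := min_le_right (p.2 i / p.1 j) (p.2 j / p.1 i)
    calc t * p.1 i ≤ (p.2 j / p.1 i) * p.1 i := by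
          exact mul_le_mul_of_nonneg_right this (le_of_lt hxi)
      _ = p.2 j := div_mul_cancel₀ _ (ne_of_gt hxi)
  have hti : t * p.1 j ≤ p.2 i := by
    have := min_le_left (p.2 i / p.1 j) (p.2 j / p.1 i)
    calc t * p.1 j ≤ (p.2 i / p.1 j) * p.1 j := by
          exact mul_le_mul_of_nonneg_right this (le_of_lt hxj)
      _ = p.2 i := div_mul_cancel₀ _ (ne_of_gt hxj)
  -- the key: sum of x_k * d_k = 0
  have hdsum : ∑ k, p.1 k * d k = 0 := by
    have : ∀ k, p.1 k * d k =
        (if k = i then p.1 i * p.1 j else 0) + (if k = j then -(p.1 j * p.1 i) else 0) := by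
      intro k
      by_cases h1 : k = i
      · subst h1
        have h2 : k ≠ j := hij
        simp [hd, h2]
      · by_cases h2 : k = j
        · subst h2
          simp [hd, h1]
          try ring
        · simp [hd, h1, h2]
    rw [Finset.sum_congr rfl fun k _ => this k, Finset.sum_add_distrib,
      Finset.sum_ite_eq' Finset.univ i, Finset.sum_ite_eq' Finset.univ j]
    simp [mul_comm]
  have key : ∀ s : ℝ, (∀ k, 0 ≤ p.2 k + s * d k) →
      (p.1, fun k => p.2 k + s * d k) ∈ S := by
    intro s hnn
    rw [hS]
    refine ⟨hx, hnn, ?_⟩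
    have : ∑ k, p.1 k * (p.2 k + s * d k)
        = ∑ k, p.1 k * p.2 k + s * ∑ k, p.1 k * d k := by
      rw [Finset.mul_sum, ← Finset.sum_add_distrib]
      exact Finset.sum_congr rfl fun k _ => by ring
    rw [this, hdsum]
    simpa using hsum
  have hnn : ∀ (ε : ℝ), ε = t ∨ ε = -t → ∀ k, 0 ≤ p.2 k + ε * d k := by
    intro ε hε k
    by_cases h1 : k = i
    · subst h1
      have hdk : d k = p.1 j := by simp [hd]
      rw [hdk]
      rcases hε with rfl | rfl
      · nlinarith
      · nlinarith
    · by_cases h2 : k = j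
      · subst h2
        have hdk : d k = -(p.1 i) := by simp [hd, h1]
        rw [hdk]
        rcases hε with rfl | rfl
        · nlinarith
        · nlinarith
      · have hdk : d k = 0 := by simp [hd, h1, h2]
        rw [hdk]
        simpa using hy k
  have haS : (p.1, fun k => p.2 k + t * d k) ∈ S := key t (hnn t (Or.inl rfl))
  have hbS : (p.1, fun k => p.2 k + (-t) * d k) ∈ S := key (-t) (hnn (-t) (Or.inr rfl))
  have hseg : p ∈ openSegment ℝ (p.1, fun k => p.2 k + t * d k)
      (p.1, fun k => p.2 k + (-t) * d k) := by
    refine ⟨1/2, 1/2, by norm_num, by norm_num, by norm_num, ?_⟩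
    apply Prod.ext
    · funext k
      simp only [Prod.fst_add, Prod.smul_fst, Pi.add_apply, Pi.smul_apply, smul_eq_mul]
      ring
    · funext k
      simp only [Prod.snd_add, Prod.smul_snd, Pi.add_apply, Pi.smul_apply, smul_eq_mul]
      ring
  have heq := (hext.2 (subset_convexHull ℝ S haS) (subset_convexHull ℝ S hbS) hseg)
  have hcontra := congrArg (fun q => q.2 i) heq
  have hdk : d i = p.1 j := by simp [hd]
  simp only [hdk] at hcontra
  nlinarith [hcontra]
end

section
/- The convex hull of S^U = {(x,y) ∈ ℤ^n_+ × ℝ^n_+ : Σ_{i=1}^n x_i y_i ≥ r, x ≤ u} is a polyhedron, i.e., it can be written as the intersection of finitely many closed half-spaces. -/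
open Finset

section PolyH

variable {E : Type*} [AddCommGroup E] [Module ℝ E]
variable {F : Type*} [AddCommGroup F] [Module ℝ F]

/-- A set is a finite intersection of closed halfspaces. -/
def IsPolyH (S : Set E) : Prop :=
  ∃ (m : ℕ) (a : Fin m → E →ₗ[ℝ] ℝ) (b : Fin m → ℝ), S = {p | ∀ k, a k p ≤ b k}

lemma isPolyH_of_fintype {ι : Type*} [Fintype ι] {S : Set E} (a : ι → E →ₗ[ℝ] ℝ) (b : ι → ℝ)
    (h : S = {p | ∀ k, a k p ≤ b k}) : IsPolyH S := by
  refine ⟨Fintype.card ι, a ∘ (Fintype.equivFin ι).symm, b ∘ (Fintype.equivFin ι).symm, ?_⟩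
  rw [h]; ext p
  constructor
  · intro hp k; exact hp _
  · intro hp k; simpa using hp ((Fintype.equivFin ι) k)

lemma IsPolyH.preimage (L : F →ₗ[ℝ] E) {S : Set E} (h : IsPolyH S) : IsPolyH (L ⁻¹' S) := by
  obtain ⟨m, a, b, rfl⟩ := h
  exact ⟨m, fun k => (a k).comp L, b, rfl⟩

lemma IsPolyH.image_equiv (e : F ≃ₗ[ℝ] E) {S : Set F} (h : IsPolyH S) : IsPolyH (e '' S) := by
  have : e '' S = e.symm.toLinearMap ⁻¹' S := by
    ext p; simp [Set.mem_image]
    constructor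
    · rintro ⟨q, hq, rfl⟩; simpa using hq
    · intro hp; exact ⟨e.symm p, hp, by simp⟩
  rw [this]; exact h.preimage _

/-- Fourier–Motzkin elimination of a single real variable. -/
lemma IsPolyH.elim1 {S : Set (ℝ × F)} (h : IsPolyH S) : IsPolyH (Prod.snd '' S) := by
  obtain ⟨m, a, b, rfl⟩ := h
  set c : Fin m → ℝ := fun k => a k (1, 0) with hc
  set g : Fin m → F →ₗ[ℝ] ℝ := fun k => (a k).comp (LinearMap.inr ℝ ℝ F) with hg
  have hak : ∀ k t x, a k (t, x) = t * c k + g k x := by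
    intro k t x
    have : (t, x) = t • ((1:ℝ), (0:F)) + ((0:ℝ), x) := by simp
    rw [this, map_add, map_smul, smul_eq_mul]
    rfl
  set A : (Fin m ⊕ Fin m × Fin m) → F →ₗ[ℝ] ℝ := Sum.elim
    (fun k => if c k = 0 then g k else 0)
    (fun kl => if 0 < c kl.1 ∧ c kl.2 < 0 then c kl.1 • g kl.2 + (- c kl.2) • g kl.1 else 0)
    with hA
  set B : (Fin m ⊕ Fin m × Fin m) → ℝ := Sum.elim
    (fun k => if c k = 0 then b k else 0)
    (fun kl => if 0 < c kl.1 ∧ c kl.2 < 0 then c kl.1 * b kl.2 + (- c kl.2) * b kl.1 else 0)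
    with hB
  apply isPolyH_of_fintype A B
  ext x
  constructor
  · rintro ⟨⟨t, x⟩, hS, rfl⟩
    simp only [Set.mem_setOf_eq] at hS
    rintro (k | ⟨k, l⟩) <;> simp only [hA, hB, Sum.elim_inl, Sum.elim_inr]
    · split_ifs with h0
      · have := hS k; rw [hak] at this; rw [h0] at this; simpa using this
      · simp
    · split_ifs with h0
      · obtain ⟨hk, hl⟩ := h0
        have h1 := hS k; have h2 := hS l
        rw [hak] at h1 h2
        simp only [LinearMap.add_apply, LinearMap.smul_apply, smul_eq_mul]
        nlinarith [mul_le_mul_of_nonneg_left h2 (le_of_lt hk),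
          mul_le_mul_of_nonneg_left h1 (by linarith : (0:ℝ) ≤ - c l)]
      · simp
  · intro hx
    simp only [Set.mem_setOf_eq, hA, hB] at hx
    have h0 : ∀ k, c k = 0 → g k x ≤ b k := by
      intro k hk
      have := hx (Sum.inl k)
      simp only [Sum.elim_inl, if_pos hk] at this; exact this
    have hpair : ∀ k l, 0 < c k → c l < 0 →
        c k * g l x + (- c l) * g k x ≤ c k * b l + (- c l) * b k := by
      intro k l hk hl
      have := hx (Sum.inr (k, l))
      have hcond : 0 < c k ∧ c l < 0 := ⟨hk, hl⟩
      simp only [Sum.elim_inr, if_pos hcond, LinearMap.add_apply, LinearMap.smul_apply,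
        smul_eq_mul] at this
      exact this
    -- find a feasible t
    by_cases hP : ∃ k, 0 < c k
    · obtain ⟨K, hKmem, hKmin⟩ := Finset.exists_min_image (univ.filter fun k => 0 < c k)
        (fun k => (b k - g k x) / c k) (by obtain ⟨k, hk⟩ := hP; exact ⟨k, by simpa using hk⟩)
      simp only [mem_filter, mem_univ, true_and] at hKmem
      refine ⟨((b K - g K x) / c K, x), ?_, rfl⟩
      intro k
      rw [hak]
      rcases lt_trichotomy (c k) 0 with hk | hk | hk
      · have hp := hpair K k hKmem hk
        have key : (b K - g K x) / c K * c k ≤ b k - g k x := by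
          rw [div_mul_eq_mul_div, div_le_iff₀ hKmem]
          nlinarith
        linarith
      · rw [hk, mul_zero, zero_add]; exact h0 k hk
      · have := hKmin k (by simpa using hk)
        calc (b K - g K x) / c K * c k + g k x ≤ (b k - g k x) / c k * c k + g k x := by
              have := mul_le_mul_of_nonneg_right this (le_of_lt hk); linarith
          _ ≤ b k := by rw [div_mul_cancel₀ _ (ne_of_gt hk)]; linarith
    · push_neg at hP
      by_cases hN : ∃ k, c k < 0
      · obtain ⟨K, hKmem, hKmax⟩ := Finset.exists_max_image (univ.filter fun k => c k < 0)
          (fun k => (b k - g k x) / c k) (by obtain ⟨k, hk⟩ := hN; exact ⟨k, by simpa using hk⟩)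
        simp only [mem_filter, mem_univ, true_and] at hKmem
        refine ⟨((b K - g K x) / c K, x), ?_, rfl⟩
        intro k
        rw [hak]
        rcases lt_or_eq_of_le (hP k) with hk | hk
        · have := hKmax k (by simpa using hk)
          have h2 : (b K - g K x) / c K * c k ≤ b k - g k x := by
            rw [← div_le_iff_of_neg hk]
            exact this
          linarith
        · rw [hk, mul_zero, zero_add]; exact h0 k hk
      · push_neg at hN
        refine ⟨(0, x), ?_, rfl⟩
        intro k
        rw [hak]
        have hck : c k = 0 := le_antisymm (hP k) (hN k)
        rw [hck, mul_zero, zero_add]; exact h0 k hck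

/-- Projecting away finitely many real coordinates preserves being a polyhedron. -/
lemma IsPolyH.proj : ∀ (N : ℕ) (α : Type) [Fintype α], Fintype.card α = N →
    ∀ (S : Set ((α → ℝ) × F)), IsPolyH S → IsPolyH (Prod.snd '' S) := by
  intro N
  induction N with
  | zero =>
    intro α _ hcard S hS
    haveI : IsEmpty α := Fintype.card_eq_zero_iff.mp hcard
    have himg : Prod.snd '' S = (LinearMap.prod (0 : F →ₗ[ℝ] (α → ℝ)) LinearMap.id) ⁻¹' S := by
      ext x
      constructor
      · rintro ⟨⟨f, y⟩, hSy, rfl⟩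
        have : f = 0 := funext fun a => isEmptyElim a
        simpa [this] using hSy
      · intro hx
        exact ⟨((0 : α → ℝ), x), hx, rfl⟩
    rw [himg]; exact hS.preimage _
  | succ N ih =>
    intro α _ hcard S hS
    let e0 : Option (Fin N) ≃ α := (finSuccEquiv N).symm.trans (Fintype.equivFinOfCardEq hcard).symm
    let e1 : (α → ℝ) ≃ₗ[ℝ] ℝ × (Fin N → ℝ) :=
      (LinearEquiv.funCongrLeft ℝ ℝ e0).trans (LinearEquiv.piOptionEquivProd ℝ)
    let e4 : ((α → ℝ) × F) ≃ₗ[ℝ] ℝ × ((Fin N → ℝ) × F) :=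
      (e1.prodCongr (LinearEquiv.refl ℝ F)).trans (LinearEquiv.prodAssoc ℝ ℝ (Fin N → ℝ) F)
    have h5 : IsPolyH (Prod.snd '' (e4 '' S)) := (hS.image_equiv e4).elim1
    have h6 := ih (Fin N) (by simp) _ h5
    have : Prod.snd '' (Prod.snd '' (e4 '' S)) = Prod.snd '' S := by
      rw [Set.image_image, Set.image_image]
      apply Set.image_congr
      intro p _
      rfl
    rwa [this] at h6

end PolyH

section Concrete

variable (n : ℕ) (r : ℝ) (u : Fin n → ℕ)

/-- Index of vertices: a lattice point of the box together with a coordinate where it's ≥ 1. -/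
abbrev VIdx := {v : ((i : Fin n) → Fin (u i + 1)) × Fin n // 1 ≤ (v.1 v.2 : ℕ)}



/-- Vertex points. -/
noncomputable def pt (v : VIdx n u) : (Fin n → ℝ) × (Fin n → ℝ) :=
  (fun i => ((v.1.1 i : ℕ) : ℝ),
   fun i => if i = v.1.2 then r / ((v.1.1 v.1.2 : ℕ) : ℝ) else 0)

/-- The linear map sending weights to the corresponding combination of vertices plus a shift. -/
noncomputable def Lmap : ((VIdx n u ⊕ Fin n) → ℝ) →ₗ[ℝ] (Fin n → ℝ) × (Fin n → ℝ) :=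
  (∑ v : VIdx n u, (LinearMap.proj (Sum.inl v)).smulRight (pt n r u v)) +
  LinearMap.prod 0 (LinearMap.funLeft ℝ ℝ Sum.inr)

lemma Lmap_fst (w : (VIdx n u ⊕ Fin n) → ℝ) (i : Fin n) :
    (Lmap n r u w).1 i = ∑ v : VIdx n u, w (Sum.inl v) * (pt n r u v).1 i := by
  simp only [Lmap, LinearMap.add_apply, LinearMap.sum_apply, LinearMap.smulRight_apply,
    LinearMap.proj_apply, LinearMap.prod_apply, Prod.fst_add, Prod.fst_sum, Pi.add_apply,
    Finset.sum_apply, Pi.smul_apply, smul_eq_mul, LinearMap.zero_apply, Pi.zero_apply, add_zero,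
    Prod.smul_fst, Prod.smul_snd, Function.prod]

lemma Lmap_snd (w : (VIdx n u ⊕ Fin n) → ℝ) (i : Fin n) :
    (Lmap n r u w).2 i = (∑ v : VIdx n u, w (Sum.inl v) * (pt n r u v).2 i) + w (Sum.inr i) := by
  simp only [Lmap, LinearMap.add_apply, LinearMap.sum_apply, LinearMap.smulRight_apply,
    LinearMap.proj_apply, LinearMap.prod_apply, Prod.snd_add, Prod.snd_sum, Pi.add_apply,
    Finset.sum_apply, Pi.smul_apply, smul_eq_mul, LinearMap.funLeft_apply, Function.comp,
    Prod.smul_fst, Prod.smul_snd, Function.prod]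

/-- The standard polyhedron of weights. -/
def Lam : Set ((VIdx n u ⊕ Fin n) → ℝ) :=
  {w | (∀ z, 0 ≤ w z) ∧ ∑ v : VIdx n u, w (Sum.inl v) = 1}

lemma lam_convex : Convex ℝ (Lam n u) := by
  intro w1 h1 w2 h2 a b ha hb hab
  constructor
  · intro z
    have := h1.1 z; have := h2.1 z
    simp only [Pi.add_apply, Pi.smul_apply, smul_eq_mul]
    nlinarith
  · simp only [Pi.add_apply, Pi.smul_apply, smul_eq_mul]
    rw [Finset.sum_add_distrib, ← Finset.mul_sum, ← Finset.mul_sum, h1.2, h2.2]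
    simpa using hab

/-- Summing an indicator-type function over the vertex index set. -/
lemma vsum (xhat : (i : Fin n) → Fin (u i + 1)) (G : Fin n → ℝ)
    (hG : ∀ j, (xhat j : ℕ) = 0 → G j = 0) :
    ∑ v : VIdx n u, (if v.1.1 = xhat then G v.1.2 else 0) = ∑ j, G j := by
  classical
  have h1 := Finset.sum_subtype
    (p := fun a : ((i : Fin n) → Fin (u i + 1)) × Fin n => 1 ≤ (a.1 a.2 : ℕ))
    (F := Subtype.fintype _)
    (Finset.univ.filter fun a : ((i : Fin n) → Fin (u i + 1)) × Fin n => 1 ≤ (a.1 a.2 : ℕ))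
    (fun a => by simp only [Finset.mem_filter, Finset.mem_univ, true_and])
    (fun a : ((i : Fin n) → Fin (u i + 1)) × Fin n => if a.1 = xhat then G a.2 else 0)
  rw [show (∑ v : VIdx n u, (if v.1.1 = xhat then G v.1.2 else 0))
      = ∑ v : {a : ((i : Fin n) → Fin (u i + 1)) × Fin n // 1 ≤ (a.1 a.2 : ℕ)},
        (fun a : ((i : Fin n) → Fin (u i + 1)) × Fin n =>
          if a.1 = xhat then G a.2 else 0) ↑v from rfl]
  rw [← h1]
  rw [Finset.sum_subset (Finset.filter_subset _ _)]
  · rw [Fintype.sum_prod_type_right]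
    apply Finset.sum_congr rfl
    intro j _
    simp only [Finset.sum_ite_eq', Finset.sum_ite_eq, Finset.mem_univ, if_true]
  · intro a _ ha
    simp only [Finset.mem_filter, Finset.mem_univ, true_and, not_le, Nat.lt_one_iff] at ha
    split_ifs with h
    · subst h
      exact hG a.2 ha
    · rfl

/-- The feasible set. -/
def SUdef : Set ((Fin n → ℝ) × (Fin n → ℝ)) :=
  {p | (∀ i, ∃ m : ℕ, p.1 i = (m : ℝ)) ∧ (∀ i, 0 ≤ p.2 i) ∧
    (∀ i, p.1 i ≤ (u i : ℝ)) ∧ r ≤ ∑ i, p.1 i * p.2 i}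

lemma cone_closed {p : (Fin n → ℝ) × (Fin n → ℝ)} (hp : p ∈ convexHull ℝ (SUdef n r u))
    (μ : Fin n → ℝ) (hμ : ∀ i, 0 ≤ μ i) :
    p + ((0 : Fin n → ℝ), μ) ∈ convexHull ℝ (SUdef n r u) := by
  set T : Set ((Fin n → ℝ) × (Fin n → ℝ)) :=
    {q | ∀ ν : Fin n → ℝ, (∀ i, 0 ≤ ν i) → q + ((0 : Fin n → ℝ), ν) ∈ convexHull ℝ (SUdef n r u)}
    with hT
  have hsub : convexHull ℝ (SUdef n r u) ⊆ T := by
    apply convexHull_min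
    · intro q hq ν hν
      apply subset_convexHull
      obtain ⟨h1, h2, h3, h4⟩ := hq
      refine ⟨?_, ?_, ?_, ?_⟩
      · intro i; simpa using h1 i
      · intro i
        simp only [Prod.snd_add, Pi.add_apply]
        exact add_nonneg (h2 i) (hν i)
      · intro i; simpa using h3 i
      · simp only [Prod.fst_add, Prod.snd_add, Pi.add_apply, Pi.zero_apply, zero_add]
        have key : ∀ i : Fin n, q.1 i * q.2 i + q.1 i * ν i = q.1 i * (q.2 i + ν i) := by
          intro i; ring
        have hnn : ∀ i : Fin n, 0 ≤ q.1 i * ν i := by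
          intro i
          apply mul_nonneg _ (hν i)
          obtain ⟨m, hm⟩ := h1 i
          rw [hm]; positivity
        calc r ≤ ∑ i, q.1 i * q.2 i := h4
          _ ≤ ∑ i, (q.1 i * q.2 i + q.1 i * ν i) := by
              apply Finset.sum_le_sum; intro i _; linarith [hnn i]
          _ = ∑ i, q.1 i * (q.2 i + ν i) := by
              apply Finset.sum_congr rfl; intro i _; ring
          _ = ∑ i, (q.1 i + 0) * (q.2 i + ν i) := by
              apply Finset.sum_congr rfl; intro i _; ring
    · intro p1 hp1 p2 hp2 a b ha hb hab
      intro ν hν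
      have h1 := hp1 ν hν
      have h2 := hp2 ν hν
      have := (convex_convexHull ℝ (SUdef n r u)) h1 h2 ha hb hab
      convert this using 1
      rw [smul_add, smul_add, add_add_add_comm, ← add_smul, hab, one_smul]
  exact hsub hp μ hμ

lemma pt_mem (hr : 0 < r) (v : VIdx n u) : pt n r u v ∈ SUdef n r u := by
  have hv : (1 : ℕ) ≤ (v.1.1 v.1.2 : ℕ) := v.2
  have hvpos : (0 : ℝ) < ((v.1.1 v.1.2 : ℕ) : ℝ) := by
    exact_mod_cast Nat.lt_of_lt_of_le Nat.zero_lt_one hv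
  refine ⟨fun i => ⟨(v.1.1 i : ℕ), rfl⟩, ?_, ?_, ?_⟩
  · intro i
    simp only [pt]
    split_ifs
    · positivity
    · exact le_refl 0
  · intro i
    simp only [pt]
    exact_mod_cast Nat.le_of_lt_succ (v.1.1 i).isLt
  · simp only [pt, mul_ite, mul_zero]
    rw [Finset.sum_ite_eq' Finset.univ v.1.2 (fun i => ((v.1.1 i : ℕ) : ℝ) * (r / ((v.1.1 v.1.2 : ℕ) : ℝ)))]
    simp only [Finset.mem_univ, if_true]
    rw [mul_div_cancel₀ _ (ne_of_gt hvpos)]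

lemma hull_eq (hr : 0 < r) :
    convexHull ℝ (SUdef n r u) = Lmap n r u '' Lam n u := by
  apply Set.Subset.antisymm
  · apply convexHull_min
    · rintro ⟨x, y⟩ ⟨h1, h2, h3, h4⟩
      dsimp only at h1 h2 h3 h4
      choose mm hmm using h1
      have hmu : ∀ i, mm i ≤ u i := by
        intro i
        have := h3 i
        rw [hmm i] at this
        exact_mod_cast this
      set xhat : (i : Fin n) → Fin (u i + 1) := fun i => ⟨mm i, Nat.lt_succ_of_le (hmu i)⟩
        with hxhat
      set s := ∑ i, x i * y i with hs
      have hrs : r ≤ s := h4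
      have hspos : 0 < s := lt_of_lt_of_le hr hrs
      have hxnn : ∀ i, 0 ≤ x i := fun i => by rw [hmm i]; positivity
      have hx0 : ∀ j, (xhat j : ℕ) = 0 → x j = 0 := by
        intro j hj
        have : mm j = 0 := hj
        rw [hmm j, this]; simp
      have hxhatx : ∀ i, ((xhat i : ℕ) : ℝ) = x i := by
        intro i
        rw [hmm i]
      set lam : VIdx n u → ℝ := fun v => if v.1.1 = xhat then x v.1.2 * y v.1.2 / s else 0
        with hlam
      set S2 : Fin n → ℝ := fun i => ∑ v : VIdx n u, lam v * (pt n r u v).2 i with hS2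
      set w : (VIdx n u ⊕ Fin n) → ℝ := Sum.elim lam (fun i => y i - S2 i) with hw
      have hsum1 : ∑ v : VIdx n u, lam v = 1 := by
        have hv := vsum (n := n) (u := u) xhat (fun j => x j * y j / s)
          (fun j hj => by show x j * y j / s = 0; rw [hx0 j hj, zero_mul, zero_div])
        rw [show (∑ v : VIdx n u, lam v)
            = ∑ v : VIdx n u, (if v.1.1 = xhat then
              (fun j => x j * y j / s) v.1.2 else 0) from rfl, hv]
        rw [← Finset.sum_div, ← hs, div_self (ne_of_gt hspos)]
      have hfst : ∀ i, ∑ v : VIdx n u, lam v * (pt n r u v).1 i = x i := by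
        intro i
        have hcong : ∀ v : VIdx n u, lam v * (pt n r u v).1 i
            = (if v.1.1 = xhat then (fun j => x j * y j / s * x i) v.1.2 else 0) := by
          intro v
          simp only [hlam, pt]
          by_cases h : (v : (((i : Fin n) → Fin (u i + 1)) × Fin n)).1 = xhat
          · rw [if_pos h, if_pos h, h, hxhatx i]
          · rw [if_neg h, if_neg h, zero_mul]
        rw [Finset.sum_congr rfl (fun v _ => hcong v),
          vsum (n := n) (u := u) xhat (fun j => x j * y j / s * x i)
            (fun j hj => by show x j * y j / s * x i = 0
                            rw [hx0 j hj, zero_mul, zero_div, zero_mul])]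
        rw [← Finset.sum_mul, ← Finset.sum_div, ← hs, div_self (ne_of_gt hspos), one_mul]
      have hsnd : ∀ i, S2 i = (x i * y i / s) * (r / x i) := by
        intro i
        have hcong : ∀ v : VIdx n u, lam v * (pt n r u v).2 i
            = (if v.1.1 = xhat then
              (fun j => x j * y j / s * (if i = j then r / x j else 0)) v.1.2 else 0) := by
          intro v
          simp only [hlam, pt]
          by_cases h : (v : (((i : Fin n) → Fin (u i + 1)) × Fin n)).1 = xhat
          · have hcast : ((v.1.1 v.1.2 : ℕ) : ℝ) = x v.1.2 := by rw [h, hxhatx]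
            rw [if_pos h, if_pos h, hcast]
          · rw [if_neg h, if_neg h, zero_mul]
        rw [hS2]
        simp only []
        rw [Finset.sum_congr rfl (fun v _ => hcong v),
          vsum (n := n) (u := u) xhat (fun j => x j * y j / s * (if i = j then r / x j else 0))
            (fun j hj => by show x j * y j / s * (if i = j then r / x j else 0) = 0
                            rw [hx0 j hj, zero_mul, zero_div, zero_mul])]
        simp [Finset.sum_ite_eq, mul_ite, mul_zero]
      have hμnn : ∀ i, 0 ≤ y i - S2 i := by
        intro i
        rw [hsnd i]
        by_cases hzero : mm i = 0
        · have hx : x i = 0 := by rw [hmm i, hzero]; simp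
          rw [hx]
          simpa using h2 i
        · have hxi : 0 < x i := by
            rw [hmm i]; exact_mod_cast Nat.pos_of_ne_zero hzero
          have heq : (x i * y i / s) * (r / x i) = y i * (r / s) := by
            field_simp
          rw [heq]
          have hle1 : r / s ≤ 1 := (div_le_one hspos).mpr hrs
          nlinarith [h2 i]
      refine ⟨w, ⟨?_, ?_⟩, ?_⟩
      · rintro (v | i)
        · simp only [hw, Sum.elim_inl, hlam]
          split_ifs
          · exact div_nonneg (mul_nonneg (hxnn _) (h2 _)) (le_of_lt hspos)
          · exact le_refl 0
        · exact hμnn i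
      · exact hsum1
      · have e1 : (Lmap n r u w).1 = x := by
          funext i
          rw [Lmap_fst]
          exact hfst i
        have e2 : (Lmap n r u w).2 = y := by
          funext i
          rw [Lmap_snd]
          show S2 i + (y i - S2 i) = y i
          ring
        exact Prod.ext e1 e2
    · exact (lam_convex n u).linear_image (Lmap n r u)
  · rintro q ⟨w, ⟨hw1, hw2⟩, rfl⟩
    have hz : ∑ v : VIdx n u, w (Sum.inl v) • pt n r u v ∈ convexHull ℝ (SUdef n r u) :=
      (convex_convexHull ℝ _).sum_mem (fun v _ => hw1 (Sum.inl v)) hw2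
        (fun v _ => subset_convexHull ℝ _ (pt_mem n r u hr v))
    have hdecomp : Lmap n r u w = (∑ v : VIdx n u, w (Sum.inl v) • pt n r u v)
        + ((0 : Fin n → ℝ), fun i => w (Sum.inr i)) := by
      refine Prod.ext ?_ ?_
      · funext i
        rw [Prod.fst_add, Prod.fst_sum, Lmap_fst]
        simp only [Pi.add_apply, Finset.sum_apply, Pi.smul_apply, smul_eq_mul,
          Pi.zero_apply, add_zero, Prod.smul_fst]
      · funext i
        rw [Prod.snd_add, Prod.snd_sum, Lmap_snd]
        simp only [Pi.add_apply, Finset.sum_apply, Pi.smul_apply, smul_eq_mul,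
          Pi.zero_apply, Prod.smul_snd]
    rw [hdecomp]
    exact cone_closed n r u hz _ (fun i => hw1 (Sum.inr i))



lemma graph_polyH : IsPolyH (Lmap n r u '' Lam n u) := by
  classical
  set W := ((VIdx n u ⊕ Fin n) → ℝ) with hW
  set E := ((Fin n → ℝ) × (Fin n → ℝ)) with hE
  set D : (W × E) →ₗ[ℝ] E :=
    LinearMap.snd ℝ W E - (Lmap n r u).comp (LinearMap.fst ℝ W E) with hD
  set cf : Fin n × Bool → E →ₗ[ℝ] ℝ := fun z =>
    (LinearMap.proj z.1).comp
      (cond z.2 (LinearMap.fst ℝ (Fin n → ℝ) (Fin n → ℝ)) (LinearMap.snd ℝ (Fin n → ℝ) (Fin n → ℝ)))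
    with hcf
  set sumf : (W × E) →ₗ[ℝ] ℝ :=
    ∑ v : VIdx n u, (LinearMap.proj (Sum.inl v : VIdx n u ⊕ Fin n)).comp (LinearMap.fst ℝ W E)
    with hsumf
  set A : (((VIdx n u ⊕ Fin n) ⊕ Bool) ⊕ ((Fin n × Bool) × Bool)) → (W × E) →ₗ[ℝ] ℝ := Sum.elim
    (Sum.elim
      (fun z => -((LinearMap.proj z).comp (LinearMap.fst ℝ W E)))
      (fun s => cond s sumf (-sumf)))
    (fun z => cond z.2 ((cf z.1).comp D) (-((cf z.1).comp D))) with hA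
  set B : (((VIdx n u ⊕ Fin n) ⊕ Bool) ⊕ ((Fin n × Bool) × Bool)) → ℝ := Sum.elim
    (Sum.elim (fun _ => 0) (fun s => cond s 1 (-1))) (fun _ => 0) with hB
  have hsumf_apply : ∀ q : W × E, sumf q = ∑ v : VIdx n u, q.1 (Sum.inl v) := by
    intro q
    rw [hsumf]
    simp only [LinearMap.sum_apply, LinearMap.comp_apply, LinearMap.fst_apply,
      LinearMap.proj_apply]
  have hD_apply : ∀ q : W × E, D q = q.2 - Lmap n r u q.1 := by
    intro q
    rw [hD]
    simp only [LinearMap.sub_apply, LinearMap.snd_apply, LinearMap.comp_apply,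
      LinearMap.fst_apply]
  have hGset : {q : W × E | q.1 ∈ Lam n u ∧ q.2 = Lmap n r u q.1} = {q | ∀ k, A k q ≤ B k} := by
    ext q
    constructor
    · rintro ⟨⟨hw1, hw2⟩, hEq⟩
      have hDq : D q = 0 := by
        rw [hD_apply, hEq, sub_self]
      rintro ((z | s) | ⟨z, sg⟩)
      · simp only [hA, hB, Sum.elim_inl, LinearMap.neg_apply, LinearMap.comp_apply,
          LinearMap.fst_apply, LinearMap.proj_apply]
        have := hw1 z
        linarith
      · cases s
        · simp only [hA, hB, Sum.elim_inl, Sum.elim_inr, cond_false, LinearMap.neg_apply]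
          rw [hsumf_apply]
          rw [hw2]
        · simp only [hA, hB, Sum.elim_inl, Sum.elim_inr, cond_true]
          rw [hsumf_apply, hw2]
      · cases sg
        · simp only [hA, hB, Sum.elim_inr, cond_false, LinearMap.neg_apply,
            LinearMap.comp_apply, hDq, map_zero, neg_zero, le_refl]
        · simp only [hA, hB, Sum.elim_inr, cond_true, LinearMap.comp_apply, hDq, map_zero,
            le_refl]
    · intro hk
      have hw1 : ∀ z, 0 ≤ q.1 z := by
        intro z
        have := hk (Sum.inl (Sum.inl z))
        simp only [hA, hB, Sum.elim_inl, LinearMap.neg_apply, LinearMap.comp_apply,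
          LinearMap.fst_apply, LinearMap.proj_apply] at this
        linarith
      have hw2 : ∑ v : VIdx n u, q.1 (Sum.inl v) = 1 := by
        have h1 := hk (Sum.inl (Sum.inr true))
        have h2 := hk (Sum.inl (Sum.inr false))
        simp only [hA, hB, Sum.elim_inl, Sum.elim_inr, cond_true, cond_false,
          LinearMap.neg_apply] at h1 h2
        rw [hsumf_apply] at h1 h2
        linarith
      have hDq : D q = 0 := by
        have hcoord : ∀ (z : Fin n × Bool), cf z (D q) = 0 := by
          intro z
          have h1 := hk (Sum.inr (z, true))
          have h2 := hk (Sum.inr (z, false))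
          simp only [hA, hB, Sum.elim_inr, cond_true, cond_false, LinearMap.neg_apply,
            LinearMap.comp_apply] at h1 h2
          linarith
        have hfst : ∀ i, (D q).1 i = 0 := by
          intro i
          have := hcoord (i, true)
          simp [hcf] at this; exact this
        have hsnd : ∀ i, (D q).2 i = 0 := by
          intro i
          have := hcoord (i, false)
          simp [hcf] at this; exact this
        refine Prod.ext ?_ ?_
        · funext i; exact hfst i
        · funext i; exact hsnd i
      refine ⟨⟨hw1, hw2⟩, ?_⟩
      rw [hD_apply] at hDq
      exact sub_eq_zero.mp hDq
  have hG : IsPolyH {q : W × E | q.1 ∈ Lam n u ∧ q.2 = Lmap n r u q.1} := by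
    rw [hGset]
    exact isPolyH_of_fintype A B rfl
  have hproj := IsPolyH.proj (Fintype.card (VIdx n u ⊕ Fin n)) (VIdx n u ⊕ Fin n) rfl _ hG
  have himg : Prod.snd '' {q : W × E | q.1 ∈ Lam n u ∧ q.2 = Lmap n r u q.1}
      = Lmap n r u '' Lam n u := by
    ext p
    constructor
    · rintro ⟨⟨w, p'⟩, ⟨hw, hp⟩, rfl⟩
      exact ⟨w, hw, hp.symm⟩
    · rintro ⟨w, hw, rfl⟩
      exact ⟨(w, Lmap n r u w), ⟨hw, rfl⟩, rfl⟩
  rwa [himg] at hproj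

end Concrete

theorem stmt_5 (n : ℕ) (hn : 1 ≤ n) (r : ℝ) (hr : 0 < r)
    (u : Fin n → ℕ) (hu : ∀ i, 1 ≤ u i)
    (SU : Set ((Fin n → ℝ) × (Fin n → ℝ)))
    (hSU : SU = {p | (∀ i, ∃ m : ℕ, p.1 i = (m : ℝ)) ∧ (∀ i, 0 ≤ p.2 i) ∧
      (∀ i, p.1 i ≤ (u i : ℝ)) ∧ r ≤ ∑ i, p.1 i * p.2 i}) :
    ∃ (m : ℕ) (a : Fin m → ((Fin n → ℝ) × (Fin n → ℝ)) →ₗ[ℝ] ℝ) (b : Fin m → ℝ),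
      convexHull ℝ SU = {p | ∀ k, a k p ≤ b k} := by
  have hSU' : SU = SUdef n r u := hSU
  rw [hSU', hull_eq n r u hr]
  exact graph_polyH n r u
end

section
/- Let (x̄, ȳ) be an extreme point of conv(W) where W = {(x,y) ∈ ℤ^n_+ × ℝ^n_+ : Σ_i x_i y_i ≥ r, x ≤ u, Gx ≤ h}. Then there exists an index t with x̄_t ȳ_t = r and ȳ_i = 0 for all i ≠ t. -/
theorem stmt_6 (n m : ℕ) (hn : 1 ≤ n) (r : ℝ) (hr : 0 < r)
    (u : Fin n → ℕ) (G : Matrix (Fin m) (Fin n) ℚ) (h : Fin m → ℚ)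
    (W : Set ((Fin n → ℝ) × (Fin n → ℝ)))
    (hW : W = {p | (∀ i, ∃ z : ℕ, p.1 i = (z : ℝ)) ∧ (∀ i, 0 ≤ p.2 i) ∧
      (∀ i, p.1 i ≤ (u i : ℝ)) ∧ (∀ k, ∑ i, (G k i : ℝ) * p.1 i ≤ (h k : ℝ)) ∧
      r ≤ ∑ i, p.1 i * p.2 i})
    (hWne : W.Nonempty)
    (p : (Fin n → ℝ) × (Fin n → ℝ))
    (hp : p ∈ (convexHull ℝ W).extremePoints ℝ) :
    ∃ t, p.1 t * p.2 t = r ∧ ∀ i, i ≠ t → p.2 i = 0 := by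
  have hpW : p ∈ W := extremePoints_convexHull_subset hp
  rw [hW] at hpW
  obtain ⟨hint, hy0, hxu, hGx, hsum⟩ := hpW
  have hx0 : ∀ i, (0:ℝ) ≤ p.1 i := by
    intro i; obtain ⟨z, hz⟩ := hint i; rw [hz]; positivity
  -- key perturbation lemma
  have key : ∀ q : Fin n → ℝ, (∀ i, 0 ≤ p.2 i + q i) → (∀ i, 0 ≤ p.2 i - q i) →
      (r ≤ ∑ i, p.1 i * (p.2 i + q i)) → (r ≤ ∑ i, p.1 i * (p.2 i - q i)) → q = 0 := by
    intro q h1 h2 h3 h4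
    have m1 : ((p.1, p.2 + q) : (Fin n → ℝ) × (Fin n → ℝ)) ∈ W := by
      rw [hW]; exact ⟨hint, h1, hxu, hGx, h3⟩
    have m2 : ((p.1, p.2 - q) : (Fin n → ℝ) × (Fin n → ℝ)) ∈ W := by
      rw [hW]; exact ⟨hint, h2, hxu, hGx, h4⟩
    have hseg : p ∈ openSegment ℝ ((p.1, p.2 + q) : (Fin n → ℝ) × (Fin n → ℝ))
        (p.1, p.2 - q) := by
      refine ⟨1/2, 1/2, by norm_num, by norm_num, by norm_num, ?_⟩
      refine Prod.ext ?_ ?_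
      · show (1/2 : ℝ) • p.1 + (1/2 : ℝ) • p.1 = p.1
        funext j; simp; ring
      · show (1/2 : ℝ) • (p.2 + q) + (1/2 : ℝ) • (p.2 - q) = p.2
        funext j; simp; ring
    have heq := hp.2 (subset_convexHull ℝ W m1) (subset_convexHull ℝ W m2) hseg
    have h5 : p.2 + q = p.2 := congrArg Prod.snd heq
    funext j
    have := congrFun h5 j
    simpa using this
  -- step A : y_i > 0 → x_i > 0
  have hA : ∀ i, 0 < p.2 i → 0 < p.1 i := by
    intro i hyi
    rcases (hx0 i).lt_or_eq with hlt | heq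
    · exact hlt
    · exfalso
      set q : Fin n → ℝ := fun j => if j = i then p.2 i else 0 with hqdef
      have hqsum : ∀ s : ℝ, ∀ j, p.1 j * (p.2 j + s * q j) = p.1 j * p.2 j := by
        intro s j
        by_cases hj : j = i
        · subst hj; rw [← heq]; ring
        · simp [hqdef, hj]
      have hq0 := key q
        (fun j => by
          by_cases hj : j = i
          · simp [hqdef, hj]; linarith [hy0 i]
          · simp [hqdef, hj]; exact hy0 j)
        (fun j => by
          by_cases hj : j = i
          · simp [hqdef, hj]
          · simp [hqdef, hj]; exact hy0 j)
        (by calc r ≤ ∑ j, p.1 j * p.2 j := hsum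
              _ = _ := (Finset.sum_congr rfl (fun j _ => by
                    have := hqsum 1 j; simpa using this.symm)))
        (by calc r ≤ ∑ j, p.1 j * p.2 j := hsum
              _ = _ := (Finset.sum_congr rfl (fun j _ => by
                    have := hqsum (-1) j
                    simp only [neg_one_mul] at this
                    rw [← this]; ring_nf)))
      have := congrFun hq0 i
      simp [hqdef] at this
      linarith
  -- step B : the sum equals r
  have hB : ∑ i, p.1 i * p.2 i = r := by
    by_contra hne
    have hgt : r < ∑ i, p.1 i * p.2 i := lt_of_le_of_ne hsum (Ne.symm hne)
    have hex : ∃ t, 0 < p.1 t * p.2 t := by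
      by_contra hc; push_neg at hc
      have : ∑ i, p.1 i * p.2 i ≤ 0 := Finset.sum_nonpos (fun i _ => hc i)
      linarith
    obtain ⟨t, ht⟩ := hex
    have hxt : 0 < p.1 t := lt_of_le_of_ne (hx0 t) (by
      rintro h0; rw [← h0] at ht; simp at ht)
    have hyt : 0 < p.2 t := by
      by_contra hc; push_neg at hc
      have h0 : p.2 t = 0 := le_antisymm hc (hy0 t)
      rw [h0] at ht; simp at ht
    set ε : ℝ := min (p.2 t) ((∑ i, p.1 i * p.2 i - r) / p.1 t) with hεdef
    have hε : 0 < ε := lt_min hyt (div_pos (by linarith) hxt)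
    set q : Fin n → ℝ := fun j => if j = t then ε else 0 with hqdef
    have hqs : ∑ j, p.1 j * q j = p.1 t * ε := by
      simp only [hqdef, mul_ite, mul_zero]
      rw [Finset.sum_ite_eq']
      simp
    have hsplit : ∀ c : ℝ, ∑ j, p.1 j * (p.2 j + c * q j)
        = (∑ j, p.1 j * p.2 j) + c * (p.1 t * ε) := by
      intro c
      rw [← hqs, Finset.mul_sum, ← Finset.sum_add_distrib]
      exact Finset.sum_congr rfl (fun j _ => by ring)
    have hq0 := key q
      (fun j => by
        by_cases hj : j = t <;> simp [hqdef, hj]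
        · linarith [hy0 t]
        · exact hy0 j)
      (fun j => by
        by_cases hj : j = t <;> simp [hqdef, hj]
        · linarith [min_le_left (p.2 t) ((∑ i, p.1 i * p.2 i - r) / p.1 t)]
        · exact hy0 j)
      (by
        have := hsplit 1
        simp only [one_mul] at this
        rw [this]
        nlinarith)
      (by
        have h6 : ∑ j, p.1 j * (p.2 j - q j) = (∑ j, p.1 j * p.2 j) + (-1) * (p.1 t * ε) := by
          rw [← hsplit (-1)]
          exact Finset.sum_congr rfl (fun j _ => by ring)
        rw [h6]
        have hle : ε ≤ (∑ i, p.1 i * p.2 i - r) / p.1 t := min_le_right _ _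
        have : ε * p.1 t ≤ ∑ i, p.1 i * p.2 i - r := by
          rw [← div_mul_cancel₀ (∑ i, p.1 i * p.2 i - r) (ne_of_gt hxt)]
          exact mul_le_mul_of_nonneg_right hle (le_of_lt hxt)
        nlinarith)
    have := congrFun hq0 t
    simp [hqdef] at this
    linarith
  -- there is some t with y_t > 0
  have hex : ∃ t, 0 < p.2 t := by
    by_contra hc; push_neg at hc
    have hz : ∀ i, p.2 i = 0 := fun i => le_antisymm (hc i) (hy0 i)
    have : ∑ i, p.1 i * p.2 i = 0 := Finset.sum_eq_zero (fun i _ => by rw [hz i]; ring)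
    rw [hB] at this; linarith
  obtain ⟨t, hyt⟩ := hex
  have hxt : 0 < p.1 t := hA t hyt
  -- uniqueness
  have huniq : ∀ i, i ≠ t → p.2 i = 0 := by
    intro i hit
    by_contra hne
    have hyi : 0 < p.2 i := lt_of_le_of_ne (hy0 i) (Ne.symm hne)
    have hxi : 0 < p.1 i := hA i hyi
    set ε : ℝ := min (p.2 i * p.1 i) (p.2 t * p.1 t) with hεdef
    have hε : 0 < ε := lt_min (mul_pos hyi hxi) (mul_pos hyt hxt)
    set q1 : Fin n → ℝ := fun j => if j = i then ε / p.1 i else 0 with hq1def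
    set q2 : Fin n → ℝ := fun j => if j = t then -(ε / p.1 t) else 0 with hq2def
    set q : Fin n → ℝ := q1 + q2 with hqdef
    have hεi : ε / p.1 i ≤ p.2 i := by
      rw [div_le_iff₀ hxi]
      calc ε ≤ p.2 i * p.1 i := min_le_left _ _
        _ = p.2 i * p.1 i := rfl
    have hεt : ε / p.1 t ≤ p.2 t := by
      rw [div_le_iff₀ hxt]
      exact min_le_right _ _
    have hqs : ∑ j, p.1 j * q j = 0 := by
      have e1 : ∑ j, p.1 j * q1 j = p.1 i * (ε / p.1 i) := by
        simp only [hq1def, mul_ite, mul_zero]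
        rw [Finset.sum_ite_eq']; simp
      have e2 : ∑ j, p.1 j * q2 j = p.1 t * (-(ε / p.1 t)) := by
        simp only [hq2def, mul_ite, mul_zero]
        rw [Finset.sum_ite_eq']; simp
      have : ∑ j, p.1 j * q j = (∑ j, p.1 j * q1 j) + ∑ j, p.1 j * q2 j := by
        rw [← Finset.sum_add_distrib]
        exact Finset.sum_congr rfl (fun j _ => by simp [hqdef]; ring)
      rw [this, e1, e2, mul_div_cancel₀ _ (ne_of_gt hxi), mul_neg,
        mul_div_cancel₀ _ (ne_of_gt hxt)]
      ring
    have hsplit : ∀ c : ℝ, ∑ j, p.1 j * (p.2 j + c * q j) = ∑ j, p.1 j * p.2 j := by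
      intro c
      have : ∑ j, p.1 j * (p.2 j + c * q j)
          = (∑ j, p.1 j * p.2 j) + c * ∑ j, p.1 j * q j := by
        rw [Finset.mul_sum, ← Finset.sum_add_distrib]
        exact Finset.sum_congr rfl (fun j _ => by ring)
      rw [this, hqs]; ring
    have hq0 := key q
      (fun j => by
        by_cases hj1 : j = i
        · subst hj1
          have : q j = ε / p.1 j := by simp [hqdef, hq1def, hq2def, hit]
          rw [this]; positivity
        · by_cases hj2 : j = t
          · subst hj2
            have : q j = -(ε / p.1 j) := by simp [hqdef, hq1def, hq2def, hj1]
            rw [this]; linarith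
          · have : q j = 0 := by simp [hqdef, hq1def, hq2def, hj1, hj2]
            rw [this]; simpa using hy0 j)
      (fun j => by
        by_cases hj1 : j = i
        · subst hj1
          have : q j = ε / p.1 j := by simp [hqdef, hq1def, hq2def, hit]
          rw [this]; linarith
        · by_cases hj2 : j = t
          · subst hj2
            have : q j = -(ε / p.1 j) := by simp [hqdef, hq1def, hq2def, hj1]
            rw [this]
            have : 0 < ε / p.1 j := div_pos hε hxt
            linarith [hy0 j]
          · have : q j = 0 := by simp [hqdef, hq1def, hq2def, hj1, hj2]
            rw [this]; simpa using hy0 j)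
      (by
        have := hsplit 1
        simp only [one_mul] at this
        rw [this, hB])
      (by
        have h6 : ∑ j, p.1 j * (p.2 j - q j) = ∑ j, p.1 j * (p.2 j + (-1) * q j) :=
          Finset.sum_congr rfl (fun j _ => by ring)
        rw [h6, hsplit (-1), hB])
    have := congrFun hq0 i
    simp [hqdef, hq1def, hq2def, hit] at this
    rcases this with h | h
    · exact (ne_of_gt hε) h
    · exact (ne_of_gt hxi) h
  refine ⟨t, ?_, huniq⟩
  have : ∑ j, p.1 j * p.2 j = p.1 t * p.2 t := by
    rw [Finset.sum_eq_single t]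
    · intro j _ hj; rw [huniq j hj]; ring
    · intro hmem; exact absurd (Finset.mem_univ t) hmem
  rw [← this, hB]
end

section
/- Every extreme point (x̄, ȳ) of conv(S^U) has the form: there is an index t and an integer p_t ∈ {1,...,u_t} with x̄_t = p_t, ȳ_t = r/p_t, and for all j ≠ t, x̄_j ∈ {0, u_j} and ȳ_j = 0. -/
private lemma half_add' {E : Type*} [AddCommGroup E] [Module ℝ E] (a v : E) :
    (1/2:ℝ) • (a + v) + (1/2:ℝ) • (a - v) = a := by module

private lemma key_extreme {E : Type*} [AddCommGroup E] [Module ℝ E] {S : Set E} {p v : E}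
    (hp : p ∈ (convexHull ℝ S).extremePoints ℝ) (ha : p + v ∈ S) (hb : p - v ∈ S)
    (hv : v ≠ 0) : False := by
  rw [mem_extremePoints] at hp
  have h := hp.2 (p + v) (subset_convexHull ℝ S ha) (p - v) (subset_convexHull ℝ S hb)
    ⟨1/2, 1/2, by norm_num, by norm_num, by norm_num, half_add' p v⟩
  exact hv (by have h1 := h.1; rwa [add_eq_left] at h1)

private lemma sum_mul_ite {n : ℕ} (x : Fin n → ℝ) (j : Fin n) (c : ℝ) :
    ∑ i, x i * (if i = j then c else 0) = x j * c := by
  simp [mul_ite, Finset.sum_ite_eq']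

theorem stmt_7 (n : ℕ) (hn : 1 ≤ n) (r : ℝ) (hr : 0 < r)
    (u : Fin n → ℕ) (hu : ∀ i, 1 ≤ u i)
    (SU : Set ((Fin n → ℝ) × (Fin n → ℝ)))
    (hSU : SU = {p | (∀ i, ∃ m : ℕ, p.1 i = (m : ℝ)) ∧ (∀ i, 0 ≤ p.2 i) ∧
      (∀ i, p.1 i ≤ (u i : ℝ)) ∧ r ≤ ∑ i, p.1 i * p.2 i})
    (p : (Fin n → ℝ) × (Fin n → ℝ))
    (hp : p ∈ (convexHull ℝ SU).extremePoints ℝ) :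
    ∃ (t : Fin n) (pt : ℕ), 1 ≤ pt ∧ pt ≤ u t ∧
      p.1 t = (pt : ℝ) ∧ p.2 t = r / (pt : ℝ) ∧
      ∀ j, j ≠ t → (p.1 j = 0 ∨ p.1 j = (u j : ℝ)) ∧ p.2 j = 0 := by
  subst hSU
  obtain ⟨hint, hy, hub, hsum⟩ := extremePoints_convexHull_subset hp
  obtain ⟨x, y⟩ := p
  simp only at hint hy hub hsum ⊢
  have hx0 : ∀ i, 0 ≤ x i := by
    intro i
    obtain ⟨m, hm⟩ := hint i
    rw [hm]; positivity
  -- Claim A : y j > 0 → x j > 0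
  have claimA : ∀ j, 0 < y j → 0 < x j := by
    intro j hj
    rcases lt_or_eq_of_le (hx0 j) with h | h
    · exact h
    exfalso
    set v2 : Fin n → ℝ := fun i => if i = j then y j else 0 with hv2
    have hsv : ∑ i, x i * v2 i = 0 := by
      rw [hv2, sum_mul_ite, ← h, zero_mul]
    apply key_extreme (v := ((0 : Fin n → ℝ), v2)) hp
    · refine ⟨fun i => by simpa using hint i, ?_, fun i => by simpa using hub i, ?_⟩
      · intro i
        simp only [Prod.snd_add, Pi.add_apply, hv2]
        rcases eq_or_ne i j with rfl | hij
        · simp; linarith [hy i]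
        · simp [hij]; exact hy i
      · simp only [Prod.fst_add, Prod.snd_add, Pi.add_apply, Pi.zero_apply, add_zero]
        have : ∑ i, x i * (y i + v2 i) = ∑ i, x i * y i := by
          simp only [mul_add, Finset.sum_add_distrib, hsv]
          ring
        rw [this]; exact hsum
    · refine ⟨fun i => by simpa using hint i, ?_, fun i => by simpa using hub i, ?_⟩
      · intro i
        simp only [Prod.snd_sub, Pi.sub_apply, hv2]
        rcases eq_or_ne i j with rfl | hij
        · simp
        · simp [hij]; exact hy i
      · simp only [Prod.fst_sub, Prod.snd_sub, Pi.sub_apply, Pi.zero_apply, sub_zero]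
        have : ∑ i, x i * (y i - v2 i) = ∑ i, x i * y i := by
          simp only [mul_sub, Finset.sum_sub_distrib, hsv]
          ring
        rw [this]; exact hsum
    · intro hcon
      have := congrFun (congrArg Prod.snd hcon) j
      simp [hv2] at this
      linarith
  -- Claim B : at most one positive y coordinate
  have claimB : ∀ j k, j ≠ k → 0 < y j → 0 < y k → False := by
    intro j k hjk hj hk
    have hxj := claimA j hj
    have hxk := claimA k hk
    set ε : ℝ := min (x j * y j) (x k * y k) with hε
    have hε0 : 0 < ε := lt_min (by positivity) (by positivity)
    set v2 : Fin n → ℝ := fun i => if i = j then ε / x j else if i = k then -(ε / x k) else 0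
      with hv2
    have hterm : ∀ i, x i * v2 i =
        (if i = j then ε else 0) + (if i = k then -ε else 0) := by
      intro i
      rcases eq_or_ne i j with rfl | h1
      · simp [hv2, hjk, mul_div_cancel₀ _ (ne_of_gt hxj)]
      rcases eq_or_ne i k with rfl | h2
      · simp [hv2, h1]
        field_simp
      · simp [hv2, h1, h2]
    have hsv : ∑ i, x i * v2 i = 0 := by
      rw [Finset.sum_congr rfl fun i _ => hterm i, Finset.sum_add_distrib]
      simp [Finset.sum_ite_eq']
    have hv2j : v2 j = ε / x j := by simp [hv2]
    have hv2k : v2 k = -(ε / x k) := by simp [hv2, hjk.symm]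
    have hv2o : ∀ i, i ≠ j → i ≠ k → v2 i = 0 := fun i h1 h2 => by simp [hv2, h1, h2]
    have hbound : ∀ i, |v2 i| ≤ y i := by
      intro i
      rcases eq_or_ne i j with rfl | h1
      · rw [hv2j, abs_of_pos (by positivity), div_le_iff₀ hxj]
        calc ε ≤ x i * y i := min_le_left _ _
        _ = y i * x i := mul_comm _ _
      rcases eq_or_ne i k with rfl | h2
      · rw [hv2k, abs_neg, abs_of_pos (by positivity), div_le_iff₀ hxk]
        calc ε ≤ x i * y i := min_le_right _ _
        _ = y i * x i := mul_comm _ _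
      · rw [hv2o i h1 h2]
        simpa using hy i
    apply key_extreme (v := ((0 : Fin n → ℝ), v2)) hp
    · refine ⟨fun i => by simpa using hint i, ?_, fun i => by simpa using hub i, ?_⟩
      · intro i
        simp only [Prod.snd_add, Pi.add_apply]
        have := (abs_le.mp (hbound i)).1
        linarith
      · simp only [Prod.fst_add, Prod.snd_add, Pi.add_apply, Pi.zero_apply, add_zero]
        have : ∑ i, x i * (y i + v2 i) = ∑ i, x i * y i := by
          simp only [mul_add, Finset.sum_add_distrib, hsv]
          ring
        rw [this]; exact hsum
    · refine ⟨fun i => by simpa using hint i, ?_, fun i => by simpa using hub i, ?_⟩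
      · intro i
        simp only [Prod.snd_sub, Pi.sub_apply]
        have := (abs_le.mp (hbound i)).2
        linarith
      · simp only [Prod.fst_sub, Prod.snd_sub, Pi.sub_apply, Pi.zero_apply, sub_zero]
        have : ∑ i, x i * (y i - v2 i) = ∑ i, x i * y i := by
          simp only [mul_sub, Finset.sum_sub_distrib, hsv]
          ring
        rw [this]; exact hsum
    · intro hcon
      have := congrFun (congrArg Prod.snd hcon) j
      simp [hv2] at this
      rcases this with h | h
      · exact absurd h (ne_of_gt hε0)
      · exact absurd h (ne_of_gt hxj)
  -- existence of t
  have claimC : ∃ t, 0 < y t := by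
    by_contra hcon
    push_neg at hcon
    have hz : ∀ i, y i = 0 := fun i => le_antisymm (hcon i) (hy i)
    have : (∑ i, x i * y i) = 0 :=
      Finset.sum_eq_zero fun i _ => by rw [hz i, mul_zero]
    linarith
  obtain ⟨t, ht⟩ := claimC
  have hxt := claimA t ht
  have hyt0 : ∀ j, j ≠ t → y j = 0 := by
    intro j hj
    by_contra hcon
    exact claimB j t hj (lt_of_le_of_ne (hy j) (Ne.symm hcon)) ht
  have hsum_eq : ∑ i, x i * y i = x t * y t := by
    rw [Fintype.sum_eq_single t]
    intro i hi
    rw [hyt0 i hi, mul_zero]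
  -- Claim D : x t * y t = r
  have claimD : x t * y t = r := by
    rcases eq_or_lt_of_le (hsum_eq ▸ hsum) with h | h
    · exact h.symm
    exfalso
    set ε : ℝ := y t - r / x t with hε
    have hε0 : 0 < ε := by
      rw [hε, sub_pos, div_lt_iff₀ hxt]
      linarith
    set v2 : Fin n → ℝ := fun i => if i = t then ε else 0 with hv2
    have hsv : ∑ i, x i * v2 i = x t * ε := by
      rw [hv2, sum_mul_ite]
    apply key_extreme (v := ((0 : Fin n → ℝ), v2)) hp
    · refine ⟨fun i => by simpa using hint i, ?_, fun i => by simpa using hub i, ?_⟩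
      · intro i
        simp only [Prod.snd_add, Pi.add_apply, hv2]
        rcases eq_or_ne i t with rfl | hit
        · simp; linarith [hy i]
        · simp [hit]; exact hy i
      · have heq : ∑ i, (x i + (0:Fin n → ℝ) i) * (y i + v2 i)
            = ∑ i, x i * y i + x t * ε := by
          simp only [Pi.zero_apply, add_zero, mul_add, Finset.sum_add_distrib, hsv]
        have h2 : 0 ≤ x t * ε := by positivity
        simp only [Prod.fst_add, Prod.snd_add, Pi.add_apply]
        calc r ≤ ∑ i, x i * y i := hsum
        _ ≤ ∑ i, x i * y i + x t * ε := by linarith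
        _ = ∑ i, (x i + (0:Fin n → ℝ) i) * (y i + v2 i) := heq.symm
    · refine ⟨fun i => by simpa using hint i, ?_, fun i => by simpa using hub i, ?_⟩
      · intro i
        simp only [Prod.snd_sub, Pi.sub_apply]
        rcases eq_or_ne i t with rfl | hit
        · have hvv : v2 i = ε := by simp [hv2]
          rw [hvv, hε]
          have : 0 ≤ r / x i := by positivity
          linarith
        · have hvv : v2 i = 0 := by simp [hv2, hit]
          rw [hvv]; simpa using hy i
      · have heq : ∑ i, (x i - (0:Fin n → ℝ) i) * (y i - v2 i)
            = ∑ i, x i * y i - x t * ε := by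
          simp only [Pi.zero_apply, sub_zero, mul_sub, Finset.sum_sub_distrib, hsv]
        simp only [Prod.fst_sub, Prod.snd_sub, Pi.sub_apply]
        rw [show (∑ i, (x i - (0:Fin n → ℝ) i) * (y i - v2 i)) =
            ∑ i, x i * y i - x t * ε from heq]
        rw [hsum_eq, hε]
        have : x t * (y t - (y t - r / x t)) = r := by
          field_simp
          ring
        nlinarith [this]
    · intro hcon
      have := congrFun (congrArg Prod.snd hcon) t
      simp [hv2] at this
      linarith
  -- extract pt
  obtain ⟨pt, hpt⟩ := hint t
  have hpt0 : 1 ≤ pt := by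
    by_contra hcon
    push_neg at hcon
    interval_cases pt
    rw [hpt] at hxt
    simp at hxt
  have hptu : pt ≤ u t := by
    have := hub t
    rw [hpt] at this
    exact_mod_cast this
  have hxtne : x t ≠ 0 := ne_of_gt hxt
  refine ⟨t, pt, hpt0, hptu, hpt, ?_, ?_⟩
  · rw [← hpt, eq_div_iff hxtne, mul_comm]
    exact claimD
  -- the j ≠ t part
  intro j hj
  refine ⟨?_, hyt0 j hj⟩
  obtain ⟨m, hm⟩ := hint j
  rcases Nat.eq_zero_or_pos m with rfl | hm1
  · left; simpa using hm
  rcases eq_or_ne m (u j) with rfl | hm2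
  · right; exact hm
  exfalso
  have hmlt : m < u j := by
    have := hub j
    rw [hm] at this
    exact lt_of_le_of_ne (by exact_mod_cast this) hm2
  have hyj := hyt0 j hj
  set v1 : Fin n → ℝ := fun i => if i = j then 1 else 0 with hv1
  have hterm : ∀ (w : Fin n → ℝ), ∀ i, (x i + w i * v1 i) * y i = x i * y i := by
    intro w i
    rcases eq_or_ne i j with rfl | hij
    · rw [hyj, mul_zero, mul_zero]
    · simp [hv1, hij]
  apply key_extreme (v := (v1, (0 : Fin n → ℝ))) hp
  · refine ⟨?_, fun i => by simpa using hy i, ?_, ?_⟩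
    · intro i
      simp only [Prod.fst_add, Pi.add_apply, hv1]
      rcases eq_or_ne i j with rfl | hij
      · exact ⟨m + 1, by rw [hm]; push_cast; simp⟩
      · obtain ⟨m', hm'⟩ := hint i
        exact ⟨m', by simp [hij, hm']⟩
    · intro i
      simp only [Prod.fst_add, Pi.add_apply]
      rcases eq_or_ne i j with rfl | hij
      · have hvv : v1 i = 1 := by simp [hv1]
        rw [hm, hvv]
        have : (m:ℝ) + 1 ≤ (u i : ℝ) := by exact_mod_cast hmlt
        linarith
      · have hvv : v1 i = 0 := by simp [hv1, hij]
        rw [hvv]; simpa using hub i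
    · simp only [Prod.fst_add, Prod.snd_add, Pi.add_apply]
      have : ∑ i, (x i + v1 i) * (y i + (0:Fin n → ℝ) i) = ∑ i, x i * y i := by
        refine Finset.sum_congr rfl fun i _ => ?_
        have := hterm 1 i
        simpa using this
      rw [this]; exact hsum
  · refine ⟨?_, fun i => by simpa using hy i, ?_, ?_⟩
    · intro i
      simp only [Prod.fst_sub, Pi.sub_apply, hv1]
      rcases eq_or_ne i j with rfl | hij
      · refine ⟨m - 1, by rw [hm]; simp only [if_pos rfl]; push_cast [hm1]; ring⟩
      · obtain ⟨m', hm'⟩ := hint i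
        exact ⟨m', by simp [hij, hm']⟩
    · intro i
      simp only [Prod.fst_sub, Pi.sub_apply]
      rcases eq_or_ne i j with rfl | hij
      · have hvv : v1 i = 1 := by simp [hv1]
        rw [hvv]
        have := hub i
        linarith
      · have hvv : v1 i = 0 := by simp [hv1, hij]
        rw [hvv]; simpa using hub i
    · simp only [Prod.fst_sub, Prod.snd_sub, Pi.sub_apply]
      have : ∑ i, (x i - v1 i) * (y i - (0:Fin n → ℝ) i) = ∑ i, x i * y i := by
        refine Finset.sum_congr rfl fun i _ => ?_
        have := hterm (-1) i
        simpa using this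
      rw [this]; exact hsum
  · intro hcon
    have := congrFun (congrArg Prod.fst hcon) j
    simp [hv1] at this
end

section
/- Conversely, every point of the form (x̄,ȳ) with x̄_t = p_t ∈ {1,...,u_t}, ȳ_t = r/p_t for some index t, and x̄_j ∈ {0, u_j}, ȳ_j = 0 for all j ≠ t, is an extreme point of conv(S^U). -/
open Finset

lemma seg_tight {E : Type*} [AddCommGroup E] [Module ℝ E] {g : E → ℝ}
    (hg : IsLinearMap ℝ g) {S : Set E} {c : ℝ} (hv : ∀ z ∈ S, c ≤ g z)
    {q q' p : E} (hq : q ∈ convexHull ℝ S) (hq' : q' ∈ convexHull ℝ S)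
    (hseg : p ∈ openSegment ℝ q q') (hp : g p = c) : g q = c ∧ g q' = c := by
  have hsub : convexHull ℝ S ⊆ {z | c ≤ g z} := convexHull_min hv (convex_halfSpace_ge hg c)
  have h1 : c ≤ g q := hsub hq
  have h2 : c ≤ g q' := hsub hq'
  obtain ⟨a, b, ha, hb, hab, hpe⟩ := hseg
  have hgp : a * g q + b * g q' = c := by
    rw [← hp, ← hpe, hg.map_add, hg.map_smul, hg.map_smul]; simp [smul_eq_mul]
  have habc : a * c + b * c = c := by rw [← add_mul, hab, one_mul]
  have key1 : a * (g q - c) + b * (g q' - c) = 0 := by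
    rw [mul_sub, mul_sub]; linarith
  have hA : 0 ≤ a * (g q - c) := mul_nonneg ha.le (by linarith)
  have hB : 0 ≤ b * (g q' - c) := mul_nonneg hb.le (by linarith)
  have hA0 : a * (g q - c) = 0 := le_antisymm (by linarith) hA
  have hB0 : b * (g q' - c) = 0 := le_antisymm (by linarith) hB
  constructor
  · rcases mul_eq_zero.1 hA0 with h | h
    · exact absurd h ha.ne'
    · linarith
  · rcases mul_eq_zero.1 hB0 with h | h
    · exact absurd h hb.ne'
    · linarith

lemma key_ineq (k m : ℕ) (r U s y : ℝ) (hr : 0 < r) (hU : 1 ≤ U) (hs : 0 ≤ s)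
    (hy : 0 ≤ y) (hprod : r - U * s ≤ (m : ℝ) * y) :
    r * (2 * (k : ℝ) + 1) ≤ (k : ℝ) * ((k : ℝ) + 1) * y + r * (m : ℝ)
      + ((2 * (k : ℝ) + 1) + (k : ℝ) * ((k : ℝ) + 1)) * U * s := by
  have hk0 : (0:ℝ) ≤ (k:ℝ) := Nat.cast_nonneg k
  have hUs : 0 ≤ U * s := mul_nonneg (by linarith) hs
  have hint : 0 ≤ ((k:ℝ) - m) * ((k:ℝ) + 1 - m) := by
    rcases le_or_gt m k with h | h
    · have h' : (m:ℝ) ≤ k := by exact_mod_cast h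
      nlinarith
    · have h' : (k:ℝ) + 1 ≤ m := by exact_mod_cast h
      nlinarith
  rcases Nat.eq_zero_or_pos m with hm | hm
  · subst hm
    simp only [Nat.cast_zero, zero_mul, mul_zero] at hprod ⊢
    have hrUs : r ≤ U * s := by linarith
    nlinarith [mul_nonneg (mul_nonneg hk0 (by linarith : (0:ℝ) ≤ (k:ℝ)+1)) hy,
      mul_nonneg (mul_nonneg hk0 (by linarith : (0:ℝ) ≤ (k:ℝ)+1)) hUs,
      mul_le_mul_of_nonneg_left hrUs (by linarith : (0:ℝ) ≤ 2*(k:ℝ)+1)]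
  · have hm1 : (1:ℝ) ≤ (m:ℝ) := by exact_mod_cast hm
    nlinarith [mul_le_mul_of_nonneg_left hprod
        (mul_nonneg hk0 (by linarith : (0:ℝ) ≤ (k:ℝ)+1)),
      mul_nonneg (mul_nonneg hUs (by linarith : (0:ℝ) ≤ (m:ℝ) - 1))
        (mul_nonneg hk0 (by linarith : (0:ℝ) ≤ (k:ℝ)+1)),
      mul_nonneg (mul_nonneg hUs (by linarith : (0:ℝ) ≤ (m:ℝ)))
        (by linarith : (0:ℝ) ≤ 2*(k:ℝ)+1),
      mul_nonneg hr.le hint, hm1, hy, hs]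

theorem stmt_8 (n : ℕ) (hn : 1 ≤ n) (r : ℝ) (hr : 0 < r)
    (u : Fin n → ℕ) (hu : ∀ i, 1 ≤ u i)
    (SU : Set ((Fin n → ℝ) × (Fin n → ℝ)))
    (hSU : SU = {p | (∀ i, ∃ m : ℕ, p.1 i = (m : ℝ)) ∧ (∀ i, 0 ≤ p.2 i) ∧
      (∀ i, p.1 i ≤ (u i : ℝ)) ∧ r ≤ ∑ i, p.1 i * p.2 i})
    (p : (Fin n → ℝ) × (Fin n → ℝ))
    (t : Fin n) (pt : ℕ) (h1 : 1 ≤ pt) (h2 : pt ≤ u t)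
    (hxt : p.1 t = (pt : ℝ)) (hyt : p.2 t = r / (pt : ℝ))
    (hrest : ∀ j, j ≠ t → (p.1 j = 0 ∨ p.1 j = (u j : ℝ)) ∧ p.2 j = 0) :
    p ∈ (convexHull ℝ SU).extremePoints ℝ := by
  have hptR : (0:ℝ) < (pt:ℝ) := by exact_mod_cast h1
  have hpt0 : (pt:ℝ) ≠ 0 := hptR.ne'
  -- p ∈ SU
  have hpS : p ∈ SU := by
    rw [hSU]
    refine ⟨?_, ?_, ?_, ?_⟩
    · intro i
      rcases eq_or_ne i t with h | h
      · exact ⟨pt, by rw [h, hxt]⟩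
      · rcases (hrest i h).1 with h' | h'
        · exact ⟨0, by simp [h']⟩
        · exact ⟨u i, h'⟩
    · intro i
      rcases eq_or_ne i t with h | h
      · rw [h, hyt]; positivity
      · rw [(hrest i h).2]
    · intro i
      rcases eq_or_ne i t with h | h
      · rw [h, hxt]; exact_mod_cast h2
      · rcases (hrest i h).1 with h' | h'
        · rw [h']; positivity
        · rw [h']
    · have hsum : ∑ i, p.1 i * p.2 i = p.1 t * p.2 t := by
        apply Finset.sum_eq_single_of_mem t (Finset.mem_univ t)
        intro j _ hj
        rw [(hrest j hj).2, mul_zero]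
      rw [hsum, hxt, hyt]
      rw [mul_div_cancel₀ r hpt0]
  rw [mem_extremePoints]
  refine ⟨subset_convexHull ℝ SU hpS, ?_⟩
  intro q hq q' hq' hseg
  -- common data
  set U : ℝ := ∑ i, (u i : ℝ) with hUdef
  have hU1 : (1:ℝ) ≤ U := by
    calc (1:ℝ) ≤ (u t : ℝ) := by exact_mod_cast hu t
    _ ≤ U := Finset.single_le_sum (f := fun i => (u i : ℝ))
        (fun i _ => by positivity) (Finset.mem_univ t)
  -- the big valid inequalities
  have valid : ∀ k : ℕ, ∀ z ∈ SU,
      r * (2*(k:ℝ)+1) ≤ (k:ℝ)*((k:ℝ)+1) * z.2 t + r * z.1 t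
        + ((2*(k:ℝ)+1) + (k:ℝ)*((k:ℝ)+1)) * U * (∑ j ∈ Finset.univ.erase t, z.2 j) := by
    intro k z hz
    rw [hSU] at hz
    obtain ⟨hzint, hzy, hzxu, hzsum⟩ := hz
    obtain ⟨m, hm⟩ := hzint t
    set s := ∑ j ∈ Finset.univ.erase t, z.2 j with hsdef
    have hs : 0 ≤ s := Finset.sum_nonneg fun j _ => hzy j
    have hxnn : ∀ i, 0 ≤ z.1 i := by
      intro i; obtain ⟨m', hm'⟩ := hzint i; rw [hm']; positivity
    have hbound : ∀ j, z.1 j ≤ U := by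
      intro j
      refine le_trans (hzxu j) ?_
      exact Finset.single_le_sum (f := fun i => (u i : ℝ))
        (fun i _ => by positivity) (Finset.mem_univ j)
    have hsplit : z.1 t * z.2 t + ∑ j ∈ Finset.univ.erase t, z.1 j * z.2 j
        = ∑ i, z.1 i * z.2 i := Finset.add_sum_erase _ (fun i => z.1 i * z.2 i) (Finset.mem_univ t)
    have h2' : ∑ j ∈ Finset.univ.erase t, z.1 j * z.2 j ≤ U * s := by
      rw [hsdef, Finset.mul_sum]
      exact Finset.sum_le_sum fun j _ => mul_le_mul_of_nonneg_right (hbound j) (hzy j)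
    have hprod : r - U * s ≤ (m:ℝ) * z.2 t := by
      rw [← hm]; linarith
    have := key_ineq k m r U s (z.2 t) hr hU1 hs (hzy t) hprod
    rw [hm]; linarith
  -- tightness of the big inequalities at p
  have ptight : ∀ k : ℕ, (k:ℝ) = (pt:ℝ) - 1 ∨ (k:ℝ) = (pt:ℝ) →
      (k:ℝ)*((k:ℝ)+1) * p.2 t + r * p.1 t
        + ((2*(k:ℝ)+1) + (k:ℝ)*((k:ℝ)+1)) * U * (∑ j ∈ Finset.univ.erase t, p.2 j)
        = r * (2*(k:ℝ)+1) := by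
    intro k hk
    have hzero : (∑ j ∈ Finset.univ.erase t, p.2 j) = 0 :=
      Finset.sum_eq_zero fun j hj => (hrest j (Finset.ne_of_mem_erase hj)).2
    rw [hzero, hxt, hyt, mul_zero, add_zero]
    rcases hk with h | h <;> rw [h] <;> field_simp <;> ring
  -- linear map structure
  have hlinG : ∀ k : ℕ, IsLinearMap ℝ (fun z : (Fin n → ℝ) × (Fin n → ℝ) =>
      (k:ℝ)*((k:ℝ)+1) * z.2 t + r * z.1 t
        + ((2*(k:ℝ)+1) + (k:ℝ)*((k:ℝ)+1)) * U * (∑ j ∈ Finset.univ.erase t, z.2 j)) := by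
    intro k
    constructor
    · intro x y
      simp only [Prod.fst_add, Prod.snd_add, Pi.add_apply, Finset.sum_add_distrib]
      ring
    · intro c x
      simp only [Prod.smul_fst, Prod.smul_snd, Pi.smul_apply, smul_eq_mul, ← Finset.mul_sum]
      ring
  have hliny : ∀ j : Fin n, IsLinearMap ℝ (fun z : (Fin n → ℝ) × (Fin n → ℝ) => z.2 j) :=
    fun j => ⟨fun x y => rfl, fun c x => rfl⟩
  have hlinx : ∀ j : Fin n, IsLinearMap ℝ (fun z : (Fin n → ℝ) × (Fin n → ℝ) => z.1 j) :=
    fun j => ⟨fun x y => rfl, fun c x => rfl⟩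
  have hlinx' : ∀ j : Fin n, IsLinearMap ℝ (fun z : (Fin n → ℝ) × (Fin n → ℝ) => -(z.1 j)) :=
    fun j => ⟨fun x y => by
      show -((x + y).1 j) = _
      simp only [Prod.fst_add, Pi.add_apply]; ring,
    fun c x => by
      show -((c • x).1 j) = _
      simp only [Prod.smul_fst, Pi.smul_apply, smul_eq_mul]; ring⟩
  -- basic facts about members of SU
  have hSUy : ∀ j : Fin n, ∀ z ∈ SU, (0:ℝ) ≤ z.2 j := by
    intro j z hz; rw [hSU] at hz; exact hz.2.1 j
  have hSUx : ∀ j : Fin n, ∀ z ∈ SU, (0:ℝ) ≤ z.1 j := by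
    intro j z hz; rw [hSU] at hz
    obtain ⟨m', hm'⟩ := hz.1 j; rw [hm']; positivity
  have hSUxu : ∀ j : Fin n, ∀ z ∈ SU, -((u j : ℝ)) ≤ -(z.1 j) := by
    intro j z hz; rw [hSU] at hz; simpa using hz.2.2.1 j
  -- tight equalities for q and q'
  have Ty : ∀ j, j ≠ t → q.2 j = 0 ∧ q'.2 j = 0 := by
    intro j hj
    exact seg_tight (hliny j) (hSUy j) hq hq' hseg ((hrest j hj).2)
  have Tx : ∀ j, j ≠ t → q.1 j = p.1 j ∧ q'.1 j = p.1 j := by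
    intro j hj
    rcases (hrest j hj).1 with h' | h'
    · have := seg_tight (hlinx j) (hSUx j) hq hq' hseg (by rw [h'])
      rw [h']; exact this
    · have := seg_tight (hlinx' j) (hSUxu j) hq hq' hseg (by rw [h'])
      rw [h']
      constructor <;> [linarith [this.1]; linarith [this.2]]
  -- final determination of the t-coordinates
  have final : ∀ w : (Fin n → ℝ) × (Fin n → ℝ), (∀ j, j ≠ t → w.2 j = 0) →
      (∀ k : ℕ, (k:ℝ) = (pt:ℝ) - 1 ∨ (k:ℝ) = (pt:ℝ) →
        (k:ℝ)*((k:ℝ)+1) * w.2 t + r * w.1 t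
          + ((2*(k:ℝ)+1) + (k:ℝ)*((k:ℝ)+1)) * U * (∑ j ∈ Finset.univ.erase t, w.2 j)
          = r * (2*(k:ℝ)+1)) →
      w.1 t = (pt:ℝ) ∧ w.2 t = r / (pt:ℝ) := by
    intro w hwy hwG
    have hzero : (∑ j ∈ Finset.univ.erase t, w.2 j) = 0 :=
      Finset.sum_eq_zero fun j hj => hwy j (Finset.ne_of_mem_erase hj)
    have hc1 : ((pt - 1 : ℕ) : ℝ) = (pt:ℝ) - 1 := by
      push_cast [Nat.cast_sub h1]; ring
    have e1 := hwG (pt - 1) (Or.inl hc1)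
    have e2 := hwG pt (Or.inr rfl)
    rw [hzero, mul_zero, add_zero] at e1 e2
    rw [hc1] at e1
    have hy : w.2 t = r / (pt:ℝ) := by
      rw [eq_div_iff hpt0]
      nlinarith [e1, e2]
    refine ⟨?_, hy⟩
    rw [hy] at e2
    have h3 : (pt:ℝ) * ((pt:ℝ)+1) * (r / (pt:ℝ)) = ((pt:ℝ)+1) * r := by
      field_simp
    rw [h3] at e2
    have : r * w.1 t = r * (pt:ℝ) := by ring_nf; ring_nf at e2; linarith
    exact mul_left_cancel₀ hr.ne' this
  have TG : ∀ k : ℕ, (k:ℝ) = (pt:ℝ) - 1 ∨ (k:ℝ) = (pt:ℝ) →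
      ((k:ℝ)*((k:ℝ)+1) * q.2 t + r * q.1 t
        + ((2*(k:ℝ)+1) + (k:ℝ)*((k:ℝ)+1)) * U * (∑ j ∈ Finset.univ.erase t, q.2 j)
        = r * (2*(k:ℝ)+1)) ∧
      ((k:ℝ)*((k:ℝ)+1) * q'.2 t + r * q'.1 t
        + ((2*(k:ℝ)+1) + (k:ℝ)*((k:ℝ)+1)) * U * (∑ j ∈ Finset.univ.erase t, q'.2 j)
        = r * (2*(k:ℝ)+1)) := by
    intro k hk
    exact seg_tight (hlinG k) (valid k) hq hq' hseg (ptight k hk)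
  obtain ⟨hq1, hq2⟩ := final q (fun j hj => (Ty j hj).1) (fun k hk => (TG k hk).1)
  obtain ⟨hq'1, hq'2⟩ := final q' (fun j hj => (Ty j hj).2) (fun k hk => (TG k hk).2)
  constructor
  · apply Prod.ext <;> funext j <;> rcases eq_or_ne j t with h | h
    · rw [h, hq1, hxt]
    · rw [(Tx j h).1]
    · rw [h, hq2, hyt]
    · rw [(Ty j h).1, (hrest j h).2]
  · apply Prod.ext <;> funext j <;> rcases eq_or_ne j t with h | h
    · rw [h, hq'1, hxt]
    · rw [(Tx j h).2]
    · rw [h, hq'2, hyt]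
    · rw [(Ty j h).2, (hrest j h).2]
end

section
/- The recession cone of conv(S^U) equals {(x,y) ∈ ℝ^n × ℝ^n : x = 0, y ≥ 0}. -/
theorem stmt_10 (n : ℕ) (hn : 1 ≤ n) (r : ℝ) (hr : 0 < r)
    (u : Fin n → ℕ) (hu : ∀ i, 1 ≤ u i)
    (SU : Set ((Fin n → ℝ) × (Fin n → ℝ)))
    (hSU : SU = {p | (∀ i, ∃ m : ℕ, p.1 i = (m : ℝ)) ∧ (∀ i, 0 ≤ p.2 i) ∧
      (∀ i, p.1 i ≤ (u i : ℝ)) ∧ r ≤ ∑ i, p.1 i * p.2 i}) :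
    {d : (Fin n → ℝ) × (Fin n → ℝ) |
        ∀ p ∈ convexHull ℝ SU, ∀ t : ℝ, 0 ≤ t → p + t • d ∈ convexHull ℝ SU}
      = {d | (∀ i, d.1 i = 0) ∧ ∀ i, 0 ≤ d.2 i} := by
  have hconv := convex_convexHull ℝ SU
  ext d
  simp only [Set.mem_setOf_eq]
  constructor
  · intro h
    classical
    set i0 : Fin n := ⟨0, hn⟩ with hi0
    set p0 : (Fin n → ℝ) × (Fin n → ℝ) := (fun i => (u i : ℝ), fun _ => r) with hp0
    have hp0SU : p0 ∈ SU := by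
      rw [hSU]
      refine ⟨fun i => ⟨u i, rfl⟩, fun _ => hr.le, fun _ => le_rfl, ?_⟩
      have h1 : (1:ℝ) ≤ (u i0 : ℝ) := by exact_mod_cast hu i0
      calc r ≤ (u i0 : ℝ) * r := by nlinarith
        _ ≤ ∑ i, (u i : ℝ) * r :=
          Finset.single_le_sum (f := fun i => (u i : ℝ) * r) (fun i _ => by positivity) (Finset.mem_univ i0)
    -- the convex superset C
    set C : Set ((Fin n → ℝ) × (Fin n → ℝ)) :=
      {q | ∀ i, 0 ≤ q.1 i ∧ q.1 i ≤ (u i : ℝ) ∧ 0 ≤ q.2 i} with hC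
    have hCconvex : Convex ℝ C := by
      intro x hx y hy a b ha hb hab i
      obtain ⟨hx1, hx2, hx3⟩ := hx i
      obtain ⟨hy1, hy2, hy3⟩ := hy i
      have e1 : (a • x + b • y).1 i = a * x.1 i + b * y.1 i := rfl
      have e2 : (a • x + b • y).2 i = a * x.2 i + b * y.2 i := rfl
      refine ⟨?_, ?_, ?_⟩
      · rw [e1]; nlinarith
      · rw [e1]
        have h1 := mul_le_mul_of_nonneg_left hx2 ha
        have h2 := mul_le_mul_of_nonneg_left hy2 hb
        nlinarith
      · rw [e2]; nlinarith
    have hSC : SU ⊆ C := by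
      intro q hq
      rw [hSU] at hq
      obtain ⟨h1, h2, h3, _⟩ := hq
      intro i
      obtain ⟨m, hm⟩ := h1 i
      exact ⟨hm ▸ (by positivity), h3 i, h2 i⟩
    have hconvC : convexHull ℝ SU ⊆ C := convexHull_min hSC hCconvex
    have key : ∀ t : ℝ, 0 ≤ t → ∀ i,
        0 ≤ (u i : ℝ) + t * d.1 i ∧ (u i : ℝ) + t * d.1 i ≤ (u i : ℝ) ∧
        0 ≤ r + t * d.2 i := by
      intro t ht i
      have hmem := hconvC (h p0 (subset_convexHull ℝ SU hp0SU) t ht) i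
      have e1 : (p0 + t • d).1 i = (u i : ℝ) + t * d.1 i := rfl
      have e2 : (p0 + t • d).2 i = r + t * d.2 i := rfl
      rw [e1, e2] at hmem
      exact hmem
    constructor
    · intro i
      by_contra hne
      rcases lt_or_gt_of_ne hne with hlt | hgt
      · -- d.1 i < 0 : large t violates nonnegativity
        set t : ℝ := ((u i : ℝ) + 1) / (-d.1 i) with htdef
        have ht : 0 ≤ t := by
          apply div_nonneg (by positivity) (by linarith)
        have h1 := (key t ht i).1
        have hne0 : -d.1 i ≠ 0 := ne_of_gt (by linarith)
        have he : t * d.1 i = -((u i : ℝ) + 1) := by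
          rw [htdef]; field_simp
        rw [he] at h1
        linarith
      · -- d.1 i > 0 : t = 1 violates upper bound
        have h2 := (key 1 zero_le_one i).2.1
        linarith
    · intro i
      by_contra hne
      push_neg at hne
      set t : ℝ := (r + 1) / (-d.2 i) with htdef
      have ht : 0 ≤ t := by
        apply div_nonneg (by positivity) (by linarith)
      have h3 := (key t ht i).2.2
      have hne0 : -d.2 i ≠ 0 := ne_of_gt (by linarith)
      have he : t * d.2 i = -(r + 1) := by
        rw [htdef]; field_simp; rw [div_self hne.ne]
      rw [he] at h3
      linarith
  · rintro ⟨hd1, hd2⟩ p hp t ht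
    set T : Set ((Fin n → ℝ) × (Fin n → ℝ)) :=
      {q | q + t • d ∈ convexHull ℝ SU} with hT
    have hTconvex : Convex ℝ T := by
      intro x hx y hy a b ha hb hab
      simp only [hT, Set.mem_setOf_eq] at hx hy ⊢
      have hb' : b = 1 - a := by linarith
      subst hb'
      have e : (a • x + (1 - a) • y) + t • d
          = a • (x + t • d) + (1 - a) • (y + t • d) := by
        module
      rw [e]
      exact hconv hx hy ha hb hab
    have hsub : SU ⊆ T := by
      intro q hq
      have hq' := hq
      rw [hSU] at hq'
      obtain ⟨h1, h2, h3, h4⟩ := hq'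
      have hmem : q + t • d ∈ SU := by
        rw [hSU]
        have e1 : ∀ i, (q + t • d).1 i = q.1 i := by
          intro i
          show q.1 i + t * d.1 i = q.1 i
          rw [hd1 i]; ring
        have e2 : ∀ i, (q + t • d).2 i = q.2 i + t * d.2 i := fun i => rfl
        refine ⟨fun i => (e1 i) ▸ h1 i, ?_, fun i => (e1 i) ▸ h3 i, ?_⟩
        · intro i
          rw [e2 i]
          have := hd2 i
          have := h2 i
          nlinarith
        · calc r ≤ ∑ i, q.1 i * q.2 i := h4
            _ ≤ ∑ i, (q + t • d).1 i * (q + t • d).2 i := by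
              apply Finset.sum_le_sum
              intro i _
              rw [e1 i, e2 i]
              obtain ⟨m, hm⟩ := h1 i
              have hq1 : 0 ≤ q.1 i := hm ▸ (by positivity)
              have := hd2 i
              have : q.2 i ≤ q.2 i + t * d.2 i := by nlinarith
              exact mul_le_mul_of_nonneg_left this hq1
      exact subset_convexHull ℝ SU hmem
    exact convexHull_min hsub hTconvex hp
end

section
/- For S^L = ∪_i S^L_i, a point (x̄,ȳ) is an extreme point of conv(S^L) if and only if it is an extreme point of conv(S^L_i) for some i. In particular, every extreme point of conv(S^L) has the form x̄_i = p, ȳ_i = r/p for some i and some integer p ∈ {1,...,u_i}, with all other coordinates zero. -/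
theorem exposed_extreme' {E : Type} [AddCommGroup E] [Module ℝ E]
    (f : E →ₗ[ℝ] ℝ) (s : Set E) (p : E) (hp : p ∈ s)
    (hle : ∀ x ∈ s, f x ≤ f p) (heq : ∀ x ∈ s, f x = f p → x = p) :
    p ∈ (convexHull ℝ s).extremePoints ℝ := by
  have hhull : ∀ z ∈ convexHull ℝ s, f z ≤ f p := fun z hz =>
    convexHull_min hle (convex_halfSpace_le (LinearMap.isLinear f) (f p)) hz
  have hface : ∀ z ∈ convexHull ℝ s, f z = f p → z = p := by
    intro z hz hfz
    rw [convexHull_eq] at hz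
    obtain ⟨ι, t, w, g, hw0, hw1, hgs, hc⟩ := hz
    rw [Finset.centerMass_eq_of_sum_1 _ _ hw1] at hc
    have hfz' : ∑ i ∈ t, w i * f (g i) = f p := by
      rw [← hfz, ← hc]
      simp [map_sum]
    have hsum : ∑ i ∈ t, w i * (f p - f (g i)) = 0 := by
      have : ∑ i ∈ t, w i * (f p - f (g i))
          = (∑ i ∈ t, w i) * f p - ∑ i ∈ t, w i * f (g i) := by
        rw [Finset.sum_mul, ← Finset.sum_sub_distrib]
        exact Finset.sum_congr rfl fun i _ => by ring
      rw [this, hw1, hfz', one_mul, sub_self]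
    have hzero := (Finset.sum_eq_zero_iff_of_nonneg (fun i hi =>
      mul_nonneg (hw0 i hi) (sub_nonneg.2 (hle _ (hgs i hi))))).1 hsum
    have hkey : ∀ i ∈ t, w i • g i = w i • p := by
      intro i hi
      rcases eq_or_lt_of_le (hw0 i hi) with h | h
      · rw [← h, zero_smul, zero_smul]
      · have h0 := hzero i hi
        have : f (g i) = f p := by
          rcases mul_eq_zero.1 h0 with h' | h'
          · exact absurd h' (ne_of_gt h)
          · linarith [sub_eq_zero.1 h']
        rw [heq _ (hgs i hi) this]
    rw [← hc, Finset.sum_congr rfl hkey, ← Finset.sum_smul, hw1, one_smul]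
  rw [mem_extremePoints]
  refine ⟨subset_convexHull ℝ s hp, ?_⟩
  intro x₁ h₁ x₂ h₂ hseg
  obtain ⟨a, b, ha, hb, hab, hsum⟩ := hseg
  have h1 : f x₁ ≤ f p := hhull _ h₁
  have h2 : f x₂ ≤ f p := hhull _ h₂
  have hfp : a * f x₁ + b * f x₂ = f p := by
    rw [← hsum]; simp
  have hsplit : a * f p + b * f p = f p := by rw [← add_mul, hab, one_mul]
  have e1 : f x₁ = f p := by
    by_contra h
    have hlt : f x₁ < f p := lt_of_le_of_ne h1 h
    linarith [mul_lt_mul_of_pos_left hlt ha, mul_le_mul_of_nonneg_left h2 hb.le]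
  have e2 : f x₂ = f p := by
    by_contra h
    have hlt : f x₂ < f p := lt_of_le_of_ne h2 h
    linarith [mul_lt_mul_of_pos_left hlt hb, mul_le_mul_of_nonneg_left h1 ha.le]
  exact ⟨hface _ h₁ e1, hface _ h₂ e2⟩

def lf2 (n : ℕ) (a b : Fin n → ℝ) : ((Fin n → ℝ) × (Fin n → ℝ)) →ₗ[ℝ] ℝ where
  toFun z := ∑ j, (a j * z.1 j + b j * z.2 j)
  map_add' x y := by
    simp only [Prod.fst_add, Prod.snd_add, Pi.add_apply]
    rw [← Finset.sum_add_distrib]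
    exact Finset.sum_congr rfl fun j _ => by ring
  map_smul' c x := by
    simp only [Prod.smul_fst, Prod.smul_snd, Pi.smul_apply, smul_eq_mul, RingHom.id_apply]
    rw [Finset.mul_sum]
    exact Finset.sum_congr rfl fun j _ => by ring

theorem lf2_single {n : ℕ} (a b : Fin n → ℝ) (z : (Fin n → ℝ) × (Fin n → ℝ)) (j : Fin n)
    (hz : ∀ k, k ≠ j → z.1 k = 0 ∧ z.2 k = 0) :
    lf2 n a b z = a j * z.1 j + b j * z.2 j := by
  show ∑ k, (a k * z.1 k + b k * z.2 k) = _
  rw [Finset.sum_eq_single j]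
  · intro k _ hk
    rw [(hz k hk).1, (hz k hk).2, mul_zero, mul_zero, add_zero]
  · intro h
    exact absurd (Finset.mem_univ j) h

set_option maxHeartbeats 1000000 in
theorem stmt_13 (n : ℕ) (hn : 1 ≤ n) (r : ℝ) (hr : 0 < r)
    (u : Fin n → ℕ) (hu : ∀ i, 1 ≤ u i)
    (SLi : Fin n → Set ((Fin n → ℝ) × (Fin n → ℝ)))
    (hSLi : ∀ i, SLi i = {p | (∃ m : ℕ, p.1 i = (m : ℝ)) ∧ 0 ≤ p.2 i ∧
      r ≤ p.1 i * p.2 i ∧ r / (u i : ℝ) ≤ p.2 i ∧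
      ∀ j, j ≠ i → p.1 j = 0 ∧ p.2 j = 0})
    (SL : Set ((Fin n → ℝ) × (Fin n → ℝ))) (hSL : SL = ⋃ i, SLi i)
    (p : (Fin n → ℝ) × (Fin n → ℝ)) :
    (p ∈ (convexHull ℝ SL).extremePoints ℝ ↔
      ∃ i, p ∈ (convexHull ℝ (SLi i)).extremePoints ℝ) ∧
    (p ∈ (convexHull ℝ SL).extremePoints ℝ →
      ∃ (i : Fin n) (q : ℕ), 1 ≤ q ∧ q ≤ u i ∧ p.1 i = (q : ℝ) ∧ p.2 i = r / (q : ℝ) ∧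
        ∀ j, j ≠ i → p.1 j = 0 ∧ p.2 j = 0) := by
  -- basic structure of members of SLi i
  have hmem : ∀ (i : Fin n) (z : (Fin n → ℝ) × (Fin n → ℝ)), z ∈ SLi i →
      ∃ m : ℕ, 1 ≤ m ∧ z.1 i = (m : ℝ) ∧ r / (m : ℝ) ≤ z.2 i ∧ r ≤ z.1 i * z.2 i ∧
        r / (u i : ℝ) ≤ z.2 i ∧ (∀ j, j ≠ i → z.1 j = 0 ∧ z.2 j = 0) := by
    intro i z hz
    rw [hSLi] at hz
    obtain ⟨⟨m, hm⟩, hy0, hxy, hyu, hjz⟩ := hz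
    have hm1 : 1 ≤ m := by
      rcases Nat.eq_zero_or_pos m with h | h
      · exfalso
        rw [h] at hm
        rw [hm] at hxy
        norm_num at hxy
        linarith
      · exact h
    have hmpos : (0 : ℝ) < (m : ℝ) := by exact_mod_cast hm1
    have hrm : r / (m : ℝ) ≤ z.2 i := by
      rw [div_le_iff₀ hmpos]
      rw [hm] at hxy
      linarith [hxy]
    exact ⟨m, hm1, hm, hrm, hxy, hyu, hjz⟩
  -- extraction: an extreme point of conv A lying in SLi i has the special form
  have extract : ∀ (A : Set ((Fin n → ℝ) × (Fin n → ℝ))) (i : Fin n), SLi i ⊆ A →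
      p ∈ SLi i → p ∈ (convexHull ℝ A).extremePoints ℝ →
      ∃ q : ℕ, 1 ≤ q ∧ q ≤ u i ∧ p.1 i = (q : ℝ) ∧ p.2 i = r / (q : ℝ) ∧
        ∀ j, j ≠ i → p.1 j = 0 ∧ p.2 j = 0 := by
    intro A i hAi hpi hext
    obtain ⟨m, hm1, hm, hrm, hxy, hyu, hjz⟩ := hmem i p hpi
    rw [mem_extremePoints] at hext
    have hhalf : ∀ v : Fin n → ℝ, ((1:ℝ)/2) • v + ((1:ℝ)/2) • v = v := by
      intro v; funext j; simp; ring
    have hmpos : (0 : ℝ) < (m : ℝ) := by exact_mod_cast hm1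
    have huipos : (0 : ℝ) < (u i : ℝ) := by exact_mod_cast hu i
    by_cases hmu : m ≤ u i
    · -- then p.2 i = r / m
      refine ⟨m, hm1, hmu, hm, ?_, hjz⟩
      by_contra hne
      have htlt : r / (m : ℝ) < p.2 i := lt_of_le_of_ne hrm (Ne.symm hne)
      set z₁ : (Fin n → ℝ) × (Fin n → ℝ) := (p.1, Function.update p.2 i (r / (m:ℝ))) with hz₁
      set z₂ : (Fin n → ℝ) × (Fin n → ℝ) :=
        (p.1, Function.update p.2 i (2 * p.2 i - r / (m:ℝ))) with hz₂
      have hmu' : (m : ℝ) ≤ (u i : ℝ) := by exact_mod_cast hmu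
      have hru : r / (u i : ℝ) ≤ r / (m : ℝ) :=
        div_le_div_of_nonneg_left hr.le hmpos hmu'
      have hz₁m : z₁ ∈ SLi i := by
        rw [hSLi]
        refine ⟨⟨m, hm⟩, ?_, ?_, ?_, ?_⟩
        · simp [hz₁, Function.update_self]
          positivity
        · simp [hz₁, Function.update_self, hm]
          rw [mul_div_cancel₀ _ (ne_of_gt hmpos)]
        · simp [hz₁, Function.update_self]
          exact hru
        · intro j hj
          simp [hz₁, Function.update_of_ne hj]
          exact hjz j hj
      have hz₂m : z₂ ∈ SLi i := by
        rw [hSLi]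
        refine ⟨⟨m, hm⟩, ?_, ?_, ?_, ?_⟩
        · simp [hz₂, Function.update_self]
          have : 0 < r / (m:ℝ) := by positivity
          linarith
        · simp [hz₂, Function.update_self, hm]
          have : r ≤ (m:ℝ) * p.2 i := by rw [hm] at hxy; linarith
          have h2 : (m:ℝ) * (r / (m:ℝ)) = r := mul_div_cancel₀ _ (ne_of_gt hmpos)
          nlinarith
        · simp [hz₂, Function.update_self]
          linarith
        · intro j hj
          simp [hz₂, Function.update_of_ne hj]
          exact hjz j hj
      have hseg : p ∈ openSegment ℝ z₁ z₂ := by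
        refine ⟨1/2, 1/2, by norm_num, by norm_num, by norm_num, ?_⟩
        refine Prod.ext ?_ ?_
        · show ((1:ℝ)/2) • z₁.1 + ((1:ℝ)/2) • z₂.1 = p.1
          exact hhalf p.1
        · show ((1:ℝ)/2) • z₁.2 + ((1:ℝ)/2) • z₂.2 = p.2
          funext j
          by_cases hj : j = i
          · subst hj
            simp [hz₁, hz₂, Function.update_self]
            ring
          · simp [hz₁, hz₂, Function.update_of_ne hj]
            ring
      have h := (hext.2 z₁ (subset_convexHull ℝ A (hAi hz₁m)) z₂
        (subset_convexHull ℝ A (hAi hz₂m)) hseg).1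
      have : z₁.2 i = p.2 i := by rw [h]
      simp [hz₁, Function.update_self] at this
      linarith
    · -- m > u i: impossible
      exfalso
      push_neg at hmu
      have hum : (u i : ℝ) + 1 ≤ (m : ℝ) := by exact_mod_cast hmu
      set z₁ : (Fin n → ℝ) × (Fin n → ℝ) := (Function.update p.1 i ((m:ℝ) - 1), p.2) with hz₁
      set z₂ : (Fin n → ℝ) × (Fin n → ℝ) := (Function.update p.1 i ((m:ℝ) + 1), p.2) with hz₂
      have hrueq : (u i : ℝ) * (r / (u i : ℝ)) = r := by field_simp
      have hy0 : 0 ≤ p.2 i := le_trans (by positivity) hyu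
      have hz₁m : z₁ ∈ SLi i := by
        rw [hSLi]
        refine ⟨⟨m - 1, ?_⟩, hy0, ?_, hyu, ?_⟩
        · simp [hz₁, Function.update_self]
          push_cast [Nat.cast_sub hm1]
          ring
        · simp [hz₁, Function.update_self]
          calc r = (u i : ℝ) * (r / (u i : ℝ)) := hrueq.symm
            _ ≤ ((m:ℝ) - 1) * (r / (u i : ℝ)) := by
                apply mul_le_mul_of_nonneg_right (by linarith) (by positivity)
            _ ≤ ((m:ℝ) - 1) * p.2 i := by
                apply mul_le_mul_of_nonneg_left hyu (by linarith)
        · intro j hj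
          simp [hz₁, Function.update_of_ne hj]
          exact hjz j hj
      have hz₂m : z₂ ∈ SLi i := by
        rw [hSLi]
        refine ⟨⟨m + 1, by push_cast; simp [hz₂, Function.update_self]⟩, hy0, ?_, hyu, ?_⟩
        · simp [hz₂, Function.update_self]
          rw [hm] at hxy
          nlinarith
        · intro j hj
          simp [hz₂, Function.update_of_ne hj]
          exact hjz j hj
      have hseg : p ∈ openSegment ℝ z₁ z₂ := by
        refine ⟨1/2, 1/2, by norm_num, by norm_num, by norm_num, ?_⟩
        refine Prod.ext ?_ ?_
        · show ((1:ℝ)/2) • z₁.1 + ((1:ℝ)/2) • z₂.1 = p.1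
          funext j
          by_cases hj : j = i
          · subst hj
            simp [hz₁, hz₂, Function.update_self, hm]
            ring
          · simp [hz₁, hz₂, Function.update_of_ne hj]
            ring
        · show ((1:ℝ)/2) • z₁.2 + ((1:ℝ)/2) • z₂.2 = p.2
          exact hhalf p.2
      have h := (hext.2 z₁ (subset_convexHull ℝ A (hAi hz₁m)) z₂
        (subset_convexHull ℝ A (hAi hz₂m)) hseg).1
      have : z₁.1 i = p.1 i := by rw [h]
      simp [hz₁, Function.update_self, hm] at this
  -- expose: a point of the special form is an extreme point of conv A
  have expose : ∀ (A : Set ((Fin n → ℝ) × (Fin n → ℝ))) (i : Fin n) (q : ℕ),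
      A ⊆ SL → p ∈ A → 1 ≤ q → q ≤ u i → p.1 i = (q:ℝ) → p.2 i = r / (q:ℝ) →
      (∀ j, j ≠ i → p.1 j = 0 ∧ p.2 j = 0) →
      p ∈ (convexHull ℝ A).extremePoints ℝ := by
    intro A i q hA hpA hq1 hq2 hp1 hp2 hpz
    have hq0 : (0:ℝ) < (q:ℝ) := by exact_mod_cast hq1
    have hq1' : (1:ℝ) ≤ (q:ℝ) := by exact_mod_cast hq1
    set a : Fin n → ℝ := fun j => if j = i then -1 else -(2*(q:ℝ)+1) with ha
    set b : Fin n → ℝ := fun j => if j = i then -((q:ℝ)^2/r) else -1 with hb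
    have hAi : a i = -1 := by simp [ha]
    have hBi : b i = -((q:ℝ)^2/r) := by simp [hb]
    have hfp : lf2 n a b p = -(2*(q:ℝ)) := by
      rw [lf2_single a b p i hpz, hAi, hBi, hp1, hp2]
      field_simp
      ring
    have hstrong : ∀ x ∈ A, lf2 n a b x ≤ lf2 n a b p ∧
        (lf2 n a b x = lf2 n a b p → x = p) := by
      intro x hx
      have hx' : x ∈ SL := hA hx
      rw [hSL, Set.mem_iUnion] at hx'
      obtain ⟨j, hxj⟩ := hx'
      obtain ⟨m, hm1, hm, hrm, hxy, hyu, hjz⟩ := hmem j x hxj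
      have hmpos : (0:ℝ) < (m:ℝ) := by exact_mod_cast hm1
      have hm1' : (1:ℝ) ≤ (m:ℝ) := by exact_mod_cast hm1
      have hval : lf2 n a b x = a j * x.1 j + b j * x.2 j := lf2_single a b x j hjz
      have hxpos : 0 < x.2 j := lt_of_lt_of_le (by positivity) hrm
      by_cases hji : j = i
      · subst hji
        rw [hval, hAi, hBi, hm, hfp]
        set t := x.2 j with hts
        have hmt : r ≤ (m:ℝ) * t := by rw [hm] at hxy; exact hxy
        have hAB : 0 ≤ r*((m:ℝ)-(q:ℝ))^2 + (q:ℝ)^2*((m:ℝ)*t - r) :=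
          add_nonneg (mul_nonneg hr.le (sq_nonneg _))
            (mul_nonneg (sq_nonneg _) (by linarith))
        have hid : (m:ℝ) * (r*(m:ℝ) - 2*(q:ℝ)*r + (q:ℝ)^2*t)
            = r*((m:ℝ)-(q:ℝ))^2 + (q:ℝ)^2*((m:ℝ)*t - r) := by ring
        have hB : 0 ≤ r*(m:ℝ) - 2*(q:ℝ)*r + (q:ℝ)^2*t := by
          nlinarith [hAB, hid, hmpos]
        have h3 : (q:ℝ)^2/r*t = (q:ℝ)^2*t/r := by ring
        have h2 : 2*(q:ℝ) - (m:ℝ) ≤ (q:ℝ)^2*t/r := by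
          rw [le_div_iff₀ hr]; nlinarith [hB]
        constructor
        · linarith [h2, h3]
        · intro hEq
          have h4 : (q:ℝ)^2/r*t = 2*(q:ℝ) - (m:ℝ) := by linarith
          have h4' : (q:ℝ)^2*t = (2*(q:ℝ) - (m:ℝ))*r := by
            rw [h3] at h4
            field_simp at h4
            linarith
          have hX : r*(m:ℝ) - 2*(q:ℝ)*r + (q:ℝ)^2*t = 0 := by linarith
          have h5 : r*((m:ℝ)-(q:ℝ))^2 + (q:ℝ)^2*((m:ℝ)*t - r) = 0 := by
            rw [hX, mul_zero] at hid
            exact hid.symm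
          have e1 : r*((m:ℝ)-(q:ℝ))^2 = 0 := by
            nlinarith [h5, mul_nonneg hr.le (sq_nonneg ((m:ℝ)-(q:ℝ))),
              mul_nonneg (sq_nonneg (q:ℝ)) (sub_nonneg.2 hmt)]
          have e1' : ((m:ℝ)-(q:ℝ))^2 = 0 := by
            rcases mul_eq_zero.1 e1 with h | h
            · exact absurd h (ne_of_gt hr)
            · exact h
          have h6 : (m:ℝ) = (q:ℝ) := by
            have := pow_eq_zero_iff (n := 2) (by norm_num) |>.1 e1'
            linarith [sub_eq_zero.1 this]
          have e2' : (q:ℝ)^2*((m:ℝ)*t - r) = 0 := by linarith [h5, e1]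
          have e2 : (m:ℝ)*t = r := by
            rcases mul_eq_zero.1 e2' with h | h
            · exfalso; have : (q:ℝ)^2 ≠ 0 := by positivity
              exact this h
            · linarith [sub_eq_zero.1 h]
          have ht : t = r / (q:ℝ) := by
            rw [h6] at e2
            field_simp
            linarith
          refine Prod.ext ?_ ?_
          · funext k
            by_cases hk : k = j
            · subst hk; rw [hm, h6, hp1]
            · rw [(hjz k hk).1, (hpz k hk).1]
          · funext k
            by_cases hk : k = j
            · subst hk
              rw [← hts, ht, hp2]
            · rw [(hjz k hk).2, (hpz k hk).2]
      · have hAj : a j = -(2*(q:ℝ)+1) := by simp [ha, hji]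
        have hBj : b j = -1 := by simp [hb, hji]
        rw [hval, hAj, hBj, hm, hfp]
        have hstrict : -(2*(q:ℝ)+1) * (m:ℝ) + -1 * x.2 j < -(2*(q:ℝ)) := by
          nlinarith [hxpos, hm1', hq1',
            mul_nonneg (by linarith : (0:ℝ) ≤ 2*(q:ℝ)+1) (by linarith : (0:ℝ) ≤ (m:ℝ) - 1)]
        exact ⟨hstrict.le, fun h => absurd h (ne_of_lt hstrict)⟩
    exact exposed_extreme' (lf2 n a b) A p hpA
      (fun x hx => (hstrong x hx).1) (fun x hx => (hstrong x hx).2)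
  have hSLsub : ∀ i, SLi i ⊆ SL := fun i => by rw [hSL]; exact Set.subset_iUnion _ i
  constructor
  · constructor
    · intro hext
      have hpSL : p ∈ SL := extremePoints_convexHull_subset hext
      rw [hSL, Set.mem_iUnion] at hpSL
      obtain ⟨i, hpi⟩ := hpSL
      obtain ⟨q, hq1, hq2, hp1, hp2, hpz⟩ := extract SL i (hSLsub i) hpi hext
      exact ⟨i, expose (SLi i) i q (hSLsub i) hpi hq1 hq2 hp1 hp2 hpz⟩
    · rintro ⟨i, hext⟩
      have hpi : p ∈ SLi i := extremePoints_convexHull_subset hext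
      obtain ⟨q, hq1, hq2, hp1, hp2, hpz⟩ := extract (SLi i) i subset_rfl hpi hext
      exact expose SL i q subset_rfl (hSLsub i hpi) hq1 hq2 hp1 hp2 hpz
  · intro hext
    have hpSL : p ∈ SL := extremePoints_convexHull_subset hext
    rw [hSL, Set.mem_iUnion] at hpSL
    obtain ⟨i, hpi⟩ := hpSL
    obtain ⟨q, hq1, hq2, hp1, hp2, hpz⟩ := extract SL i (hSLsub i) hpi hext
    exact ⟨i, q, hq1, hq2, hp1, hp2, hpz⟩
end

section
/- Let x̄ > 0, ȳ > 0, r > 0 and define f(w) = x̄/(2w-1) + ȳ w(w-1)/(r(2w-1)) for real w ≥ 1. If 4 x̄ r > ȳ, then f is strictly convex on [1,∞) and its unique minimizer is w̄ = 1/2 + (1/2)√(4 x̄ r/ȳ − 1). -/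
set_option maxHeartbeats 1000000

theorem stmt_14 (xb yb r : ℝ) (hx : 0 < xb) (hy : 0 < yb) (hr : 0 < r)
    (hcond : yb < 4 * xb * r)
    (f : ℝ → ℝ)
    (hf : ∀ w, f w = xb / (2 * w - 1) + yb * w * (w - 1) / (r * (2 * w - 1)))
    (wbar : ℝ) (hw : wbar = 1 / 2 + Real.sqrt (4 * xb * r / yb - 1) / 2) :
    StrictConvexOn ℝ (Set.Ici 1) f ∧
    (wbar ∈ Set.Ici (1 : ℝ) →
      ∀ w ∈ Set.Ici (1 : ℝ), w ≠ wbar → f wbar < f w) := by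
  constructor
  · refine ⟨convex_Ici 1, ?_⟩
    intro x hx1 y hy1 hxy a b ha hb hab
    simp only [smul_eq_mul]
    rw [hf, hf, hf]
    have hx1 : (1:ℝ) ≤ x := hx1
    have hy1 : (1:ℝ) ≤ y := hy1
    have hp : (0:ℝ) < 2*x - 1 := by linarith
    have hq : (0:ℝ) < 2*y - 1 := by linarith
    have hz : (0:ℝ) < 2*(a*x + b*y) - 1 := by nlinarith
    have hA : (0:ℝ) < 4*xb*r - yb := by linarith
    have hpq : x - y ≠ 0 := sub_ne_zero.mpr hxy
    have hkey : 0 < a*b*(x-y)^2 := by positivity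
    obtain rfl : b = 1 - a := by linarith
    have h1 := hp.ne'
    have h2 := hq.ne'
    have h3 := hz.ne'
    have h4 := hr.ne'
    have hdiff : a * (xb / (2 * x - 1) + yb * x * (x - 1) / (r * (2 * x - 1)))
        + (1 - a) * (xb / (2 * y - 1) + yb * y * (y - 1) / (r * (2 * y - 1)))
        - (xb / (2 * (a * x + (1 - a) * y) - 1)
           + yb * (a * x + (1 - a) * y) * (a * x + (1 - a) * y - 1) / (r * (2 * (a * x + (1 - a) * y) - 1)))
        = ((4*xb*r - yb) * (a*(1 - a)*(x-y)^2))
          / (r * ((2*x-1) * ((2*y-1) * (2*(a*x+(1 - a)*y)-1)))) := by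
      field_simp
      ring
    have hpos : 0 < ((4*xb*r - yb) * (a*(1 - a)*(x-y)^2))
        / (r * ((2*x-1) * ((2*y-1) * (2*(a*x+(1 - a)*y)-1)))) :=
      div_pos (mul_pos hA hkey) (by positivity)
    linarith [hdiff, hpos]
  · intro hwbar w hw1 hne
    set s := Real.sqrt (4 * xb * r / yb - 1) with hsdef
    have harg : (0:ℝ) < 4*xb*r/yb - 1 := by
      rw [sub_pos, lt_div_iff₀ hy]; linarith
    have hs2 : s^2 = 4*xb*r/yb - 1 := Real.sq_sqrt (le_of_lt harg)
    have hs0 : 0 < s := Real.sqrt_pos.mpr harg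
    have hw1 : (1:ℝ) ≤ w := hw1
    have hu : (0:ℝ) < 2*w - 1 := by linarith
    have hune : 2*w - 1 ≠ s := by
      intro h; apply hne; rw [hw]; linarith
    have hxb : xb = (yb*s^2 + yb)/(4*r) := by
      rw [hs2]; field_simp; ring
    have hsq : 0 < (2*w-1-s)^2 := by
      have h := sub_ne_zero.mpr hune
      positivity
    rw [hf, hf, hw]
    have e1 : 2*(1/2 + s/2) - 1 = s := by ring
    rw [e1]
    rw [hxb]
    have h1 := hu.ne'
    have h2 := hs0.ne'
    have h3 := hr.ne'
    have hdiff : ((yb*s^2 + yb)/(4*r) / (2 * w - 1) + yb * w * (w - 1) / (r * (2 * w - 1)))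
        - ((yb*s^2 + yb)/(4*r) / s + yb * (1/2 + s/2) * (1/2 + s/2 - 1) / (r * s))
        = yb * (2*w-1-s)^2 / (4 * (r * (2*w-1))) := by
      field_simp
      ring
    have hpos : 0 < yb * (2*w-1-s)^2 / (4 * (r * (2*w-1))) :=
      div_pos (mul_pos hy hsq) (by positivity)
    linarith [hdiff, hpos]
end

section
/- Suppose d ≥ 0 and c > 0 componentwise. Then min over S of c^T x + d^T y equals min over i ∈ {1,...,n} of min over (x_i,y_i) with x_i ∈ ℤ_{≥1}, y_i ≥ 0, x_i y_i ≥ r of c_i x_i + d_i y_i, i.e., the optimal value of the linear objective over S is attained at a point with exactly one nonzero coordinate pair. -/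
theorem stmt_17 (n : ℕ) (hn : 1 ≤ n) (r : ℝ) (hr : 0 < r)
    (c d : Fin n → ℝ) (hc : ∀ i, 0 < c i) (hd : ∀ i, 0 ≤ d i)
    (S : Set ((Fin n → ℝ) × (Fin n → ℝ)))
    (hS : S = {p | (∀ i, ∃ m : ℕ, p.1 i = (m : ℝ)) ∧ (∀ i, 0 ≤ p.2 i) ∧
      r ≤ ∑ i, p.1 i * p.2 i}) :
    ∃ (t : Fin n) (xt : ℕ) (yt : ℝ), 1 ≤ xt ∧ 0 ≤ yt ∧ r ≤ (xt : ℝ) * yt ∧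
      (fun i => if i = t then (xt : ℝ) else 0, fun i => if i = t then yt else 0) ∈ S ∧
      (∀ q ∈ S, c t * (xt : ℝ) + d t * yt ≤ ∑ i, (c i * q.1 i + d i * q.2 i)) ∧
      (∀ (i : Fin n) (x : ℕ) (y : ℝ), 1 ≤ x → 0 ≤ y → r ≤ (x : ℝ) * y →
        c t * (xt : ℝ) + d t * yt ≤ c i * (x : ℝ) + d i * y) := by
  classical
  have i0 : Fin n := ⟨0, hn⟩
  obtain ⟨cm, -, hcm⟩ := Finset.exists_min_image Finset.univ c ⟨i0, Finset.mem_univ i0⟩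
  have hcm' : ∀ i, c cm ≤ c i := fun i => hcm i (Finset.mem_univ i)
  set B : ℝ := c i0 * 1 + d i0 * (r / 1) with hBdef
  have hB0 : 0 < B := by
    have h1 := hc i0
    have h2 : 0 ≤ d i0 * (r / 1) := mul_nonneg (hd i0) (by positivity)
    simp only [hBdef]; linarith
  obtain ⟨M, hM⟩ := exists_nat_gt (B / c cm)
  have hM1 : 1 ≤ M := by
    have h1 : 0 < B / c cm := div_pos hB0 (hc cm)
    have : (0:ℝ) < (M:ℝ) := lt_trans h1 hM
    exact_mod_cast Nat.one_le_iff_ne_zero.mpr (by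
      intro h; rw [h] at this; simp at this)
  have hmemi0 : ((i0, 1) : Fin n × ℕ) ∈ Finset.univ ×ˢ Finset.Icc 1 M := by
    simp [Finset.mem_Icc, hM1]
  obtain ⟨⟨t, xt⟩, hmem, hmin⟩ := Finset.exists_min_image (Finset.univ ×ˢ Finset.Icc 1 M)
    (fun p => c p.1 * p.2 + d p.1 * (r / p.2)) ⟨(i0, 1), hmemi0⟩
  obtain ⟨-, hxt⟩ := Finset.mem_product.mp hmem
  have hxt1 : 1 ≤ xt := (Finset.mem_Icc.mp hxt).1
  have hxtM : xt ≤ M := (Finset.mem_Icc.mp hxt).2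
  have hxtR : (0:ℝ) < (xt:ℝ) := by exact_mod_cast hxt1
  set yt : ℝ := r / (xt:ℝ) with hytdef
  have hyt : 0 ≤ yt := le_of_lt (div_pos hr hxtR)
  have hxy : (xt:ℝ) * yt = r := by
    rw [hytdef]; field_simp
  have hBle : c t * (xt:ℝ) + d t * yt = c t * (xt:ℝ) + d t * (r / (xt:ℝ)) := by rw [hytdef]
  -- key lemma: optimality over all single-coordinate feasible points
  have keyA : ∀ (i : Fin n) (x : ℕ) (y : ℝ), 1 ≤ x → 0 ≤ y → r ≤ (x:ℝ) * y →
      c t * (xt:ℝ) + d t * yt ≤ c i * (x:ℝ) + d i * y := by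
    intro i x y hx hy hr'
    have hxR : (0:ℝ) < (x:ℝ) := by exact_mod_cast hx
    have h1 : r / (x:ℝ) ≤ y := (div_le_iff₀ hxR).mpr (by linarith [mul_comm (x:ℝ) y ▸ hr'])
    have h2 : d i * (r / (x:ℝ)) ≤ d i * y := mul_le_mul_of_nonneg_left h1 (hd i)
    by_cases hcase : x ≤ M
    · have h3 := hmin (i, x) (by simp [Finset.mem_Icc, hx, hcase])
      simp only at h3
      rw [hBle]
      linarith
    · push_neg at hcase
      have h4 := hmin (i0, 1) hmemi0
      simp only [Nat.cast_one] at h4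
      have h5 : c t * (xt:ℝ) + d t * yt ≤ B := by rw [hBle, hBdef]; exact h4
      have h6 : B < c cm * (x:ℝ) := by
        have hMx : (M:ℝ) < (x:ℝ) := by exact_mod_cast hcase
        have : B / c cm < (x:ℝ) := lt_trans hM hMx
        calc B = (B / c cm) * c cm := (div_mul_cancel₀ B (hc cm).ne').symm
          _ < (x:ℝ) * c cm := by
              exact mul_lt_mul_of_pos_right this (hc cm)
          _ = c cm * (x:ℝ) := mul_comm _ _
      have h7 : c cm * (x:ℝ) ≤ c i * (x:ℝ) := mul_le_mul_of_nonneg_right (hcm' i) hxR.le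
      have h8 : 0 ≤ d i * y := mul_nonneg (hd i) hy
      linarith
  refine ⟨t, xt, yt, hxt1, hyt, le_of_eq hxy.symm, ?_, ?_, keyA⟩
  · rw [hS]
    refine ⟨fun i => ?_, fun i => ?_, ?_⟩
    · by_cases h : i = t
      · exact ⟨xt, by simp [h]⟩
      · exact ⟨0, by simp [h]⟩
    · by_cases h : i = t <;> simp [h, hyt]
    · have hsum : ∑ i, (if i = t then (xt:ℝ) else 0) * (if i = t then yt else 0)
          = (xt:ℝ) * yt := by
        rw [Finset.sum_eq_single t]
        · simp
        · intro b _ hb; simp [hb]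
        · intro h; exact absurd (Finset.mem_univ t) h
      simp only at hsum ⊢
      rw [hsum, hxy]
  · intro q hq
    rw [hS] at hq
    obtain ⟨hq1, hq2, hq3⟩ := hq
    set V := c t * (xt:ℝ) + d t * yt with hVdef
    set S0 := ∑ i, q.1 i * q.2 i with hS0def
    have hS0 : 0 < S0 := lt_of_lt_of_le hr hq3
    have hq1nn : ∀ i, 0 ≤ q.1 i := fun i => by
      obtain ⟨m, hm⟩ := hq1 i; rw [hm]; exact Nat.cast_nonneg m
    have hterm : ∀ i, 0 ≤ q.1 i * q.2 i := fun i => mul_nonneg (hq1nn i) (hq2 i)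
    have hpt : ∀ i, V * ((q.1 i * q.2 i) / S0) ≤ c i * q.1 i + d i * q.2 i := by
      intro i
      rcases eq_or_lt_of_le (hterm i) with h0 | hpos
      · rw [← h0]
        simp only [zero_div, mul_zero]
        have := mul_nonneg (hc i).le (hq1nn i)
        have := mul_nonneg (hd i) (hq2 i)
        linarith
      · obtain ⟨m, hm⟩ := hq1 i
        have hm1 : 1 ≤ m := by
          rcases Nat.eq_zero_or_pos m with h | h
          · exfalso
            rw [h] at hm
            simp only [Nat.cast_zero] at hm
            rw [hm, zero_mul] at hpos
            exact lt_irrefl _ hpos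
          · exact h
        set lam := (q.1 i * q.2 i) / S0 with hlamdef
        have hlam_pos : 0 < lam := div_pos hpos hS0
        have hlam_le : lam ≤ 1 := (div_le_one hS0).mpr
          (Finset.single_le_sum (fun j _ => hterm j) (Finset.mem_univ i))
        have hyA : 0 ≤ q.2 i / lam := div_nonneg (hq2 i) hlam_pos.le
        have hne : q.1 i * q.2 i ≠ 0 := ne_of_gt hpos
        have hprod : (m:ℝ) * (q.2 i / lam) = S0 := by
          rw [← hm, hlamdef]
          field_simp
          exact div_self hne
        have h1 := keyA i m (q.2 i / lam) hm1 hyA (by rw [hprod]; exact hq3)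
        have h2 := mul_le_mul_of_nonneg_left h1 hlam_pos.le
        have h3 : lam * (c i * (m:ℝ) + d i * (q.2 i / lam)) =
            lam * (c i * (m:ℝ)) + d i * q.2 i := by
          field_simp
        have h4 : lam * (c i * (m:ℝ)) ≤ c i * (m:ℝ) := by
          have hcm0 : 0 ≤ c i * (m:ℝ) := mul_nonneg (hc i).le (Nat.cast_nonneg m)
          nlinarith
        rw [hm]
        rw [h3] at h2
        have : V * lam = lam * V := mul_comm _ _
        linarith
    have hsumlam : ∑ i, (q.1 i * q.2 i) / S0 = 1 := by
      rw [← Finset.sum_div, ← hS0def, div_self hS0.ne']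
    calc V = V * 1 := (mul_one V).symm
      _ = V * (∑ i, (q.1 i * q.2 i) / S0) := by rw [hsumlam]
      _ = ∑ i, V * ((q.1 i * q.2 i) / S0) := Finset.mul_sum _ _ _
      _ ≤ ∑ i, (c i * q.1 i + d i * q.2 i) := Finset.sum_le_sum fun i _ => hpt i
end

section
/- The point ω = (5, 1, 6, 5/6) lies in conv(S) where S = {(x,y) ∈ ℤ²_+ × ℝ²_+ : x₁y₁ + x₂y₂ ≥ 20}, but ω violates the inequality (5 y₁)/20 + (6 y₂)/20 ≥ 1, which is valid for S^U = S ∩ {x₁ ≤ 5, x₂ ≤ 6}; hence conv(S^U) is strictly contained in conv(S) ∩ {x₁ ≤ 5, x₂ ≤ 6}. -/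
theorem stmt_18
    (S SU : Set ((Fin 2 → ℝ) × (Fin 2 → ℝ)))
    (hS : S = {p | (∀ i, ∃ m : ℕ, p.1 i = (m : ℝ)) ∧ (∀ i, 0 ≤ p.2 i) ∧
      (20 : ℝ) ≤ p.1 0 * p.2 0 + p.1 1 * p.2 1})
    (hSU : SU = {p ∈ S | p.1 0 ≤ 5 ∧ p.1 1 ≤ 6})
    (ω : (Fin 2 → ℝ) × (Fin 2 → ℝ))
    (hω : ω = (![5, 6], ![1, 5 / 6])) :
    ω ∈ convexHull ℝ S ∧
    (5 * ω.2 0) / 20 + (6 * ω.2 1) / 20 < 1 ∧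
    (∀ p ∈ SU, 1 ≤ (5 * p.2 0) / 20 + (6 * p.2 1) / 20) ∧
    convexHull ℝ SU ⊂ convexHull ℝ S ∩ {p | p.1 0 ≤ 5 ∧ p.1 1 ≤ 6} := by
  have hA : ((![10, 0], ![2, 0]) : (Fin 2 → ℝ) × (Fin 2 → ℝ)) ∈ S := by
    rw [hS]
    refine ⟨?_, ?_, by norm_num⟩
    · intro i; fin_cases i
      · exact ⟨10, by norm_num⟩
      · exact ⟨0, by norm_num⟩
    · intro i; fin_cases i <;> norm_num
  have hB : ((![0, 12], ![0, 5/3]) : (Fin 2 → ℝ) × (Fin 2 → ℝ)) ∈ S := by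
    rw [hS]
    refine ⟨?_, ?_, by norm_num⟩
    · intro i; fin_cases i
      · exact ⟨0, by norm_num⟩
      · exact ⟨12, by norm_num⟩
    · intro i; fin_cases i <;> norm_num
  have hωhull : ω ∈ convexHull ℝ S := by
    have hseg := segment_subset_convexHull (𝕜 := ℝ) hA hB
    apply hseg
    refine ⟨1/2, 1/2, by norm_num, by norm_num, by norm_num, ?_⟩
    rw [hω]
    refine Prod.ext ?_ ?_ <;> · funext i; fin_cases i <;>
      simp [Prod.smul_fst, Prod.smul_snd] <;> norm_num
  have hviol : (5 * ω.2 0) / 20 + (6 * ω.2 1) / 20 < 1 := by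
    rw [hω]; norm_num
  have hvalid : ∀ p ∈ SU, 1 ≤ (5 * p.2 0) / 20 + (6 * p.2 1) / 20 := by
    intro p hp
    rw [hSU] at hp
    obtain ⟨hpS, hx1, hx2⟩ := hp
    rw [hS] at hpS
    obtain ⟨hnat, hy, hineq⟩ := hpS
    have h0 : (0:ℝ) ≤ p.1 0 := by obtain ⟨m, hm⟩ := hnat 0; rw [hm]; positivity
    have h1 : (0:ℝ) ≤ p.1 1 := by obtain ⟨m, hm⟩ := hnat 1; rw [hm]; positivity
    have hy0 := hy 0
    have hy1 := hy 1
    nlinarith [mul_nonneg (sub_nonneg.2 hx1) hy0, mul_nonneg (sub_nonneg.2 hx2) hy1]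
  refine ⟨hωhull, hviol, hvalid, ?_, ?_⟩
  · -- subset
    have hsub1 : convexHull ℝ SU ⊆ convexHull ℝ S := by
      apply convexHull_mono; rw [hSU]; intro p hp; exact hp.1
    have hconv : Convex ℝ {p : (Fin 2 → ℝ) × (Fin 2 → ℝ) | p.1 0 ≤ 5 ∧ p.1 1 ≤ 6} := by
      intro p hp q hq a b ha hb hab
      simp only [Set.mem_setOf_eq, Prod.smul_fst, Pi.add_apply, Pi.smul_apply, Prod.fst_add,
        smul_eq_mul] at *
      constructor <;> nlinarith [hp.1, hq.1, hp.2, hq.2]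
    have hsub2 : convexHull ℝ SU ⊆ {p : (Fin 2 → ℝ) × (Fin 2 → ℝ) | p.1 0 ≤ 5 ∧ p.1 1 ≤ 6} := by
      apply convexHull_min _ hconv
      rw [hSU]; intro p hp; exact hp.2
    exact fun p hp => ⟨hsub1 hp, hsub2 hp⟩
  · -- not superset: ω in RHS but not LHS
    intro hcon
    have hωin : ω ∈ convexHull ℝ S ∩ {p : (Fin 2 → ℝ) × (Fin 2 → ℝ) | p.1 0 ≤ 5 ∧ p.1 1 ≤ 6} := by
      refine ⟨hωhull, ?_⟩
      rw [hω]; constructor <;> norm_num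
    have hωSU : ω ∈ convexHull ℝ SU := hcon hωin
    have hhalf : Convex ℝ {p : (Fin 2 → ℝ) × (Fin 2 → ℝ) |
        1 ≤ (5 * p.2 0) / 20 + (6 * p.2 1) / 20} := by
      intro p hp q hq a b ha hb hab
      simp only [Set.mem_setOf_eq, Prod.smul_snd, Pi.add_apply, Pi.smul_apply, Prod.snd_add,
        smul_eq_mul] at *
      nlinarith
    have h2 : (1:ℝ) ≤ 5 * ω.2 0 / 20 + 6 * ω.2 1 / 20 := convexHull_min hvalid hhalf hωSU
    linarith
end

section
/- For any index set Q ⊆ {1,...,n} and any choice k_i ∈ {1,...,u_i} for i ∉ Q, the inequality Σ_{i∈Q} (u_i y_i)/r + Σ_{i∉Q} (a_{k_i} x_i + b_{k_i} y_i) ≥ 1 is valid for S^U, where a_k = 1/(2k-1), b_k = k(k-1)/(r(2k-1)). -/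
lemma min_one_add (a b : ℝ) (ha : 0 ≤ a) (hb : 0 ≤ b) :
    min 1 (a + b) ≤ min 1 a + min 1 b := by
  simp only [min_def]; split_ifs <;> linarith

lemma sum_min_one_le {ι : Type*} (s : Finset ι) (t : ι → ℝ) (ht : ∀ i ∈ s, 0 ≤ t i) :
    min 1 (∑ i ∈ s, t i) ≤ ∑ i ∈ s, min 1 (t i) := by
  induction s using Finset.cons_induction with
  | empty => simp
  | cons a s ha ih =>
    rw [Finset.sum_cons, Finset.sum_cons]
    have h1 := min_one_add (t a) (∑ i ∈ s, t i) (ht a (by simp))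
      (Finset.sum_nonneg fun i hi => ht i (by simp [hi]))
    have h2 := ih (fun i hi => ht i (by simp [hi]))
    linarith

lemma key_pointwise (r : ℝ) (hr : 0 < r) (m k : ℕ) (hk : 1 ≤ k) (y : ℝ) (hy : 0 ≤ y) :
    min 1 ((m : ℝ) * y / r) ≤
      (1 / (2 * (k : ℝ) - 1)) * m + ((k : ℝ) * ((k : ℝ) - 1) / (r * (2 * (k : ℝ) - 1))) * y := by
  have hK1 : (1 : ℝ) ≤ (k : ℝ) := by exact_mod_cast hk
  have hM0 : (0 : ℝ) ≤ (m : ℝ) := Nat.cast_nonneg m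
  set K : ℝ := (k : ℝ) with hK
  set M : ℝ := (m : ℝ) with hM
  have h2K : (0 : ℝ) < 2 * K - 1 := by linarith
  have hfac : 0 ≤ (M - K) * (M - K + 1) := by
    rcases le_or_gt K M with h | h
    · apply mul_nonneg <;> linarith
    · have hmk : m < k := by rw [hK, hM] at h; exact_mod_cast h
      have hMK : M + 1 ≤ K := by rw [hK, hM]; exact_mod_cast hmk
      have h0 : 0 ≤ (K - M) * (K - M - 1) := mul_nonneg (by linarith) (by linarith)
      nlinarith [h0]
  have heq : (1 / (2 * K - 1)) * M + (K * (K - 1) / (r * (2 * K - 1))) * y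
      = (r * M + K * (K - 1) * y) / (r * (2 * K - 1)) := by
    field_simp
  rw [heq]
  rcases le_total (M * y / r) 1 with h | h
  · rw [min_eq_right h]
    rw [div_le_div_iff₀ hr (by positivity)]
    have hMy : M * y ≤ r := by rwa [div_le_one hr] at h
    nlinarith [mul_nonneg hy hfac, mul_nonneg hM0 (sub_nonneg.2 hMy)]
  · rw [min_eq_left h]
    rw [le_div_iff₀ (by positivity)]
    have hMy : r ≤ M * y := by rwa [le_div_iff₀ hr, one_mul] at h
    have hMpos : 0 < M := by
      rcases hM0.lt_or_eq with h' | h'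
      · exact h'
      · exfalso; rw [← h', zero_mul] at hMy; linarith
    have hKK : 0 ≤ K * (K - 1) := mul_nonneg (by linarith) (by linarith)
    nlinarith [mul_nonneg hKK (sub_nonneg.2 hMy), mul_pos hr hMpos,
      mul_nonneg hr.le hfac, mul_nonneg (mul_nonneg hr.le hMpos.le) hfac]

theorem stmt_19 (n : ℕ) (hn : 1 ≤ n) (r : ℝ) (hr : 0 < r)
    (u : Fin n → ℕ) (hu : ∀ i, 1 ≤ u i)
    (SU : Set ((Fin n → ℝ) × (Fin n → ℝ)))
    (hSU : SU = {p | (∀ i, ∃ m : ℕ, p.1 i = (m : ℝ)) ∧ (∀ i, 0 ≤ p.2 i) ∧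
      (∀ i, p.1 i ≤ (u i : ℝ)) ∧ r ≤ ∑ i, p.1 i * p.2 i})
    (Q : Finset (Fin n)) (k : Fin n → ℕ)
    (hk : ∀ i ∉ Q, 1 ≤ k i ∧ k i ≤ u i)
    (p : (Fin n → ℝ) × (Fin n → ℝ)) (hp : p ∈ SU) :
    1 ≤ ∑ i ∈ Q, (u i : ℝ) * p.2 i / r
      + ∑ i ∈ Qᶜ, ((1 / (2 * (k i : ℝ) - 1)) * p.1 i
          + ((k i : ℝ) * ((k i : ℝ) - 1) / (r * (2 * (k i : ℝ) - 1))) * p.2 i) := by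
  subst hSU
  obtain ⟨hx, hy, hxu, hsum⟩ := hp
  set t : Fin n → ℝ := fun i => p.1 i * p.2 i / r with ht
  have hx0 : ∀ i, 0 ≤ p.1 i := by
    intro i; obtain ⟨m, hm⟩ := hx i; rw [hm]; positivity
  have ht0 : ∀ i, 0 ≤ t i := fun i => by
    have := hx0 i; have := hy i; positivity
  have h1 : ∀ i ∈ Q, min 1 (t i) ≤ (u i : ℝ) * p.2 i / r := by
    intro i _
    calc min 1 (t i) ≤ t i := min_le_right _ _
      _ ≤ (u i : ℝ) * p.2 i / r := by
          have := hy i; have := hxu i; have := hx0 i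
          show p.1 i * p.2 i / r ≤ _
          gcongr
  have h2 : ∀ i ∈ Qᶜ, min 1 (t i) ≤ ((1 / (2 * (k i : ℝ) - 1)) * p.1 i
      + ((k i : ℝ) * ((k i : ℝ) - 1) / (r * (2 * (k i : ℝ) - 1))) * p.2 i) := by
    intro i hi
    obtain ⟨m, hm⟩ := hx i
    have hki := (hk i (Finset.mem_compl.mp hi)).1
    rw [ht]; simp only []
    rw [hm]
    exact key_pointwise r hr m (k i) hki (p.2 i) (hy i)
  have hs : 1 ≤ ∑ i, t i := by
    rw [ht]; simp only []
    rw [← Finset.sum_div, le_div_iff₀ hr, one_mul]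
    exact hsum
  calc (1 : ℝ) = min 1 (∑ i, t i) := (min_eq_left hs).symm
    _ ≤ ∑ i, min 1 (t i) := sum_min_one_le _ _ (fun i _ => ht0 i)
    _ = ∑ i ∈ Q, min 1 (t i) + ∑ i ∈ Qᶜ, min 1 (t i) := (Finset.sum_add_sum_compl Q _).symm
    _ ≤ _ := add_le_add (Finset.sum_le_sum h1) (Finset.sum_le_sum h2)
end
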